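/- arXiv:1512.04473 — 5 statements merged into one kernel-verified Lean document; each statement's English description precedes it below -/
import Mathlib

section
/- Let λ_n : (−δ₀,δ₀) → ℂ be continuous with F(λ_n(t)) = 2cos t for all t, and set λ₀ = λ_n(0). If Φ₀(·,λ₀) is not identically zero on [0,1] (which holds, after possibly interchanging the roles of Φ and G, whenever the geometric multiplicity of the eigenvalue λ₀ of the periodic problem L₀ is 1), then there is δ ∈ (0,δ₀) such that ∥Φ_t(·,λ_n(t))∥ ≠ 0 and ∥Φ_{−t}(·,λ_n(t))∥ ≠ 0 for all |t| < δ, for each fixed x ∈ [0,1] the functions t ↦ Φ_t(x,λ_n(t))/∥Φ_t(·,λ_n(t))∥ and t ↦ conj(Φ_{−t}(x,λ_n(t)))/∥Φ_{−t}(·,λ_n(t))∥ are continuous at t = 0, and t ↦ α_n(t) is continuous at t = 0. -/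
open MeasureTheory Set
open scoped Real Classical

noncomputable section

/-- `y` (with first derivative `yd`) solves the Hill equation `-y'' + q y = λ y` on `[0,1]`
in the Carathéodory sense: `y` and `y'` are absolutely continuous and the equation holds
almost everywhere, expressed via the equivalent integral equations. -/
structure IsHillSolution (q : ℝ → ℂ) (lam : ℂ) (y yd : ℝ → ℂ) : Prop where
  int_yd : IntervalIntegrable yd volume 0 1
  int_rhs : IntervalIntegrable (fun s => q s * y s - lam * y s) volume 0 1
  y_eq : ∀ x ∈ Icc (0:ℝ) 1, y x = y 0 + ∫ s in (0:ℝ)..x, yd s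
  yd_eq : ∀ x ∈ Icc (0:ℝ) 1, yd x = yd 0 + ∫ s in (0:ℝ)..x, (q s * y s - lam * y s)

/-- The standard context for the Hill operator: a `1`-periodic integrable potential `q`
together with the fundamental solutions `θ`, `φ` (with `x`-derivatives `θd`, `φd`)
of `-y'' + q y = λ y` normalized at `x = 0`, jointly continuous in `(x, λ)`,
entire in `λ` for fixed `x`, and satisfying the Wronskian identity. -/
structure HillContext where
  q : ℝ → ℂ
  int_q : IntervalIntegrable q volume 0 1
  periodic_q : ∀ x, q (x + 1) = q x
  θ : ℝ → ℂ → ℂ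
  θd : ℝ → ℂ → ℂ
  φ : ℝ → ℂ → ℂ
  φd : ℝ → ℂ → ℂ
  sol_θ : ∀ lam, IsHillSolution q lam (fun x => θ x lam) (fun x => θd x lam)
  sol_φ : ∀ lam, IsHillSolution q lam (fun x => φ x lam) (fun x => φd x lam)
  θ_init : ∀ lam, θ 0 lam = 1
  θd_init : ∀ lam, θd 0 lam = 0
  φ_init : ∀ lam, φ 0 lam = 0
  φd_init : ∀ lam, φd 0 lam = 1
  θ_cont : Continuous fun p : ℝ × ℂ => θ p.1 p.2
  θd_cont : Continuous fun p : ℝ × ℂ => θd p.1 p.2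
  φ_cont : Continuous fun p : ℝ × ℂ => φ p.1 p.2
  φd_cont : Continuous fun p : ℝ × ℂ => φd p.1 p.2
  θ_entire : ∀ x, Differentiable ℂ (θ x)
  θd_entire : ∀ x, Differentiable ℂ (θd x)
  φ_entire : ∀ x, Differentiable ℂ (φ x)
  φd_entire : ∀ x, Differentiable ℂ (φd x)
  wronskian : ∀ x lam, θ x lam * φd x lam - θd x lam * φ x lam = 1

namespace HillContext

variable (H : HillContext)

/-- The Hill discriminant `F(λ) = θ(1,λ) + φ'(1,λ)`. -/
def F (lam : ℂ) : ℂ := H.θ 1 lam + H.φd 1 lam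

/-- `Φ_t(x,λ) = φ(1,λ)θ(x,λ) + (e^{it} - θ(1,λ))φ(x,λ)`. -/
def Phi (t : ℝ) (x : ℝ) (lam : ℂ) : ℂ :=
  H.φ 1 lam * H.θ x lam + (Complex.exp (Complex.I * t) - H.θ 1 lam) * H.φ x lam

/-- `G_t(x,λ) = θ'(1,λ)φ(x,λ) + (e^{it} - φ'(1,λ))θ(x,λ)`. -/
def G (t : ℝ) (x : ℝ) (lam : ℂ) : ℂ :=
  H.θd 1 lam * H.φ x lam + (Complex.exp (Complex.I * t) - H.φd 1 lam) * H.θ x lam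

end HillContext

/-- The `L²(0,1)` norm of a function. -/
def l2norm (f : ℝ → ℂ) : ℝ := Real.sqrt (∫ x in (0:ℝ)..1, ‖f x‖ ^ 2)

namespace HillContext

variable (H : HillContext)

/-- The normalized eigenfunction `Ψ_{n,t}` along the branch `lamn`. -/
def Psi (lamn : ℝ → ℂ) (t : ℝ) (x : ℝ) : ℂ :=
  if l2norm (fun s => H.Phi t s (lamn t)) ≠ 0 then
    H.Phi t x (lamn t) / (l2norm (fun s => H.Phi t s (lamn t)) : ℂ)
  else
    H.G t x (lamn t) / (l2norm (fun s => H.G t s (lamn t)) : ℂ)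

/-- The normalized adjoint eigenfunction `Ψ*_{n,t}` along the branch `lamn`. -/
def PsiStar (lamn : ℝ → ℂ) (t : ℝ) (x : ℝ) : ℂ :=
  if l2norm (fun s => H.Phi (-t) s (lamn t)) ≠ 0 then
    (starRingEnd ℂ) (H.Phi (-t) x (lamn t)) / (l2norm (fun s => H.Phi (-t) s (lamn t)) : ℂ)
  else
    (starRingEnd ℂ) (H.G (-t) x (lamn t)) / (l2norm (fun s => H.G (-t) s (lamn t)) : ℂ)

/-- `α_n(t) = ∫₀¹ Ψ_{n,t}(x) conj(Ψ*_{n,t}(x)) dx`. -/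
def alpha (lamn : ℝ → ℂ) (t : ℝ) : ℂ :=
  ∫ x in (0:ℝ)..1, H.Psi lamn t x * (starRingEnd ℂ) (H.PsiStar lamn t x)

end HillContext

lemma HillContext.phi_param_cont (H : HillContext) {e : ℝ → ℝ} {μ : ℝ → ℂ}
    (he : Continuous e) (hμ : Continuous μ) :
    Continuous fun p : ℝ × ℝ => H.Phi (e p.1) p.2 (μ p.1) := by
  have hμ1 : Continuous fun p : ℝ × ℝ => μ p.1 := hμ.comp continuous_fst
  have c1 : Continuous fun p : ℝ × ℝ => H.φ 1 (μ p.1) :=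
    H.φ_cont.comp (continuous_const.prodMk hμ1)
  have c2 : Continuous fun p : ℝ × ℝ => H.θ p.2 (μ p.1) :=
    H.θ_cont.comp (continuous_snd.prodMk hμ1)
  have c3 : Continuous fun p : ℝ × ℝ => H.θ 1 (μ p.1) :=
    H.θ_cont.comp (continuous_const.prodMk hμ1)
  have c4 : Continuous fun p : ℝ × ℝ => H.φ p.2 (μ p.1) :=
    H.φ_cont.comp (continuous_snd.prodMk hμ1)
  have c5 : Continuous fun p : ℝ × ℝ => Complex.exp (Complex.I * (e p.1 : ℝ)) :=
    Complex.continuous_exp.comp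
      (continuous_const.mul (Complex.continuous_ofReal.comp (he.comp continuous_fst)))
  exact (c1.mul c2).add ((c5.sub c3).mul c4)


set_option maxHeartbeats 2000000 in
/-- (Lemma 1(b).)  Let `λ_n : (-δ₀,δ₀) → ℂ` be continuous with `F(λ_n(t)) = 2 cos t`, and
set `λ₀ = λ_n(0)`.  If `Φ₀(·,λ₀)` is not identically zero on `[0,1]` (which holds, after
possibly interchanging the roles of `Φ` and `G`, whenever the geometric multiplicity of the
eigenvalue `λ₀` of the periodic problem `L₀` is `1`), then there is `δ ∈ (0,δ₀)` such that
`∥Φ_t(·,λ_n(t))∥ ≠ 0` and `∥Φ_{-t}(·,λ_n(t))∥ ≠ 0` for `|t| < δ`; for each fixed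
`x ∈ [0,1]` the normalized eigenfunction `t ↦ Φ_t(x,λ_n(t))/∥Φ_t(·,λ_n(t))∥` and the
adjoint one are continuous at `t = 0`; and `t ↦ α_n(t)` is continuous at `t = 0`. -/
theorem Psi_alpha_continuousAt_zero (H : HillContext) (δ₀ : ℝ) (hδ₀ : 0 < δ₀)
    (lamn : ℝ → ℂ) (hcont : ContinuousOn lamn (Ioo (-δ₀) δ₀))
    (hF : ∀ t ∈ Ioo (-δ₀) δ₀, H.F (lamn t) = 2 * (Real.cos t : ℂ))
    (hPhi_ne : ∃ x ∈ Icc (0:ℝ) 1, H.Phi 0 x (lamn 0) ≠ 0) :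
    ∃ δ, 0 < δ ∧ δ < δ₀ ∧
      (∀ t : ℝ, |t| < δ →
        l2norm (fun s => H.Phi t s (lamn t)) ≠ 0 ∧
        l2norm (fun s => H.Phi (-t) s (lamn t)) ≠ 0) ∧
      (∀ x ∈ Icc (0:ℝ) 1,
        ContinuousAt
          (fun t : ℝ => H.Phi t x (lamn t) / (l2norm (fun s => H.Phi t s (lamn t)) : ℂ)) 0 ∧
        ContinuousAt
          (fun t : ℝ => (starRingEnd ℂ) (H.Phi (-t) x (lamn t)) /
            (l2norm (fun s => H.Phi (-t) s (lamn t)) : ℂ)) 0) ∧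
      ContinuousAt (H.alpha lamn) 0 := by
  clear hF
  set c : ℝ := δ₀ / 2 with hcdef
  have hc0 : 0 < c := by positivity
  have hcδ : c < δ₀ := by simp only [hcdef]; linarith
  -- an everywhere-continuous extension of the branch
  obtain ⟨μ, hμcont, hμeq⟩ : ∃ μ : ℝ → ℂ, Continuous μ ∧ ∀ t : ℝ, |t| ≤ c → μ t = lamn t := by
    refine ⟨fun t => lamn (max (-c) (min t c)), ?_, ?_⟩
    · apply hcont.comp_continuous
        (continuous_const.max (continuous_id'.min continuous_const))
      intro t
      constructor
      · have : -c ≤ max (-c) (min t c) := le_max_left _ _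
        linarith
      · have h1 : max (-c) (min t c) ≤ c := max_le (by linarith) (min_le_right _ _)
        linarith
    · intro t ht
      rw [abs_le] at ht
      show lamn (max (-c) (min t c)) = lamn t
      rw [min_eq_left ht.2, max_eq_right ht.1]
  -- the two parametrized families and their L² integrals
  have hP : Continuous fun p : ℝ × ℝ => H.Phi p.1 p.2 (μ p.1) :=
    H.phi_param_cont (e := fun t => t) continuous_id hμcont
  have hP2 : Continuous fun p : ℝ × ℝ => H.Phi (-p.1) p.2 (μ p.1) :=
    H.phi_param_cont (e := fun t => -t) continuous_neg hμcont
  set N : ℝ → ℝ := fun t => ∫ x in (0:ℝ)..1, ‖H.Phi t x (μ t)‖ ^ 2 with hNdef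
  set N2 : ℝ → ℝ := fun t => ∫ x in (0:ℝ)..1, ‖H.Phi (-t) x (μ t)‖ ^ 2 with hN2def
  have hNcont : Continuous N :=
    intervalIntegral.continuous_parametric_intervalIntegral_of_continuous'
      (f := fun t x => ‖H.Phi t x (μ t)‖ ^ 2)
        (by show Continuous fun p : ℝ × ℝ => ‖H.Phi p.1 p.2 (μ p.1)‖ ^ 2; exact (hP.norm).pow 2) 0 1
  have hN2cont : Continuous N2 :=
    intervalIntegral.continuous_parametric_intervalIntegral_of_continuous'
      (f := fun t x => ‖H.Phi (-t) x (μ t)‖ ^ 2)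
        (by show Continuous fun p : ℝ × ℝ => ‖H.Phi (-p.1) p.2 (μ p.1)‖ ^ 2; exact (hP2.norm).pow 2) 0 1
  have hμ0 : μ 0 = lamn 0 := hμeq 0 (by simp [le_of_lt hc0])
  have hN0 : 0 < N 0 := by
    obtain ⟨x₀, hx₀, hne⟩ := hPhi_ne
    refine intervalIntegral.integral_pos one_pos
      (((hP.comp (continuous_const.prodMk continuous_id)).norm.pow 2).continuousOn)
      (fun x _ => by positivity) ⟨x₀, hx₀, ?_⟩
    have hne' : H.Phi 0 x₀ (μ 0) ≠ 0 := by rw [hμ0]; exact hne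
    exact pow_pos (norm_pos_iff.2 hne') 2
  have hN20 : 0 < N2 0 := by
    have h : N2 0 = N 0 := by simp only [hN2def, hNdef, neg_zero]
    rw [h]; exact hN0
  -- norms agree with √N near 0
  have key1 : ∀ t : ℝ, |t| ≤ c → l2norm (fun s => H.Phi t s (lamn t)) = Real.sqrt (N t) := by
    intro t ht
    rw [← hμeq t ht]; rfl
  have key2 : ∀ t : ℝ, |t| ≤ c → l2norm (fun s => H.Phi (-t) s (lamn t)) = Real.sqrt (N2 t) := by
    intro t ht
    rw [← hμeq t ht]; rfl
  -- choose δ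
  have hU : IsOpen {t : ℝ | 0 < N t ∧ 0 < N2 t} :=
    (isOpen_lt continuous_const hNcont).inter (isOpen_lt continuous_const hN2cont)
  obtain ⟨ε, hε0, hball⟩ := Metric.isOpen_iff.1 hU 0 ⟨hN0, hN20⟩
  refine ⟨min ε c, lt_min hε0 hc0, lt_of_le_of_lt (min_le_right _ _) hcδ, ?_, ?_, ?_⟩
  · -- nonvanishing of the norms
    intro t ht
    have htc : |t| ≤ c := le_of_lt (lt_of_lt_of_le ht (min_le_right _ _))
    have htε : t ∈ Metric.ball (0:ℝ) ε := by
      simp [Real.dist_eq, lt_of_lt_of_le ht (min_le_left _ _)]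
    obtain ⟨h1, h2⟩ := hball htε
    rw [key1 t htc, key2 t htc]
    exact ⟨ne_of_gt (Real.sqrt_pos.2 h1), ne_of_gt (Real.sqrt_pos.2 h2)⟩
  · -- pointwise continuity of the normalized eigenfunctions
    intro x hx
    have hev : ∀ᶠ t in nhds (0:ℝ), |t| ≤ c := by
      filter_upwards [Metric.ball_mem_nhds (0:ℝ) hc0] with t ht
      rw [Metric.mem_ball, Real.dist_eq, sub_zero] at ht
      exact le_of_lt ht
    constructor
    · have hQ : ContinuousAt (fun t : ℝ => H.Phi t x (μ t) / ((Real.sqrt (N t) : ℝ) : ℂ)) 0 := by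
        apply ContinuousAt.div
        · exact (hP.comp (continuous_id.prodMk continuous_const)).continuousAt
        · exact (Complex.continuous_ofReal.comp (Real.continuous_sqrt.comp hNcont)).continuousAt
        · exact Complex.ofReal_ne_zero.2 (ne_of_gt (Real.sqrt_pos.2 hN0))
      refine hQ.congr ?_
      filter_upwards [hev] with t ht
      rw [key1 t ht, hμeq t ht]
    · have hQ : ContinuousAt
          (fun t : ℝ => (starRingEnd ℂ) (H.Phi (-t) x (μ t)) / ((Real.sqrt (N2 t) : ℝ) : ℂ)) 0 := by
        apply ContinuousAt.div
        · exact (Complex.continuous_conj.comp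
            (hP2.comp (continuous_id.prodMk continuous_const))).continuousAt
        · exact (Complex.continuous_ofReal.comp (Real.continuous_sqrt.comp hN2cont)).continuousAt
        · exact Complex.ofReal_ne_zero.2 (ne_of_gt (Real.sqrt_pos.2 hN20))
      refine hQ.congr ?_
      filter_upwards [hev] with t ht
      rw [key2 t ht, hμeq t ht]
  · -- continuity of α at 0
    set A : ℝ → ℂ := fun t =>
      (∫ x in (0:ℝ)..1, H.Phi t x (μ t) * H.Phi (-t) x (μ t)) /
        ((Real.sqrt (N t) : ℂ) * (Real.sqrt (N2 t) : ℂ)) with hAdef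
    have hAcont : ContinuousAt A 0 := by
      apply ContinuousAt.div
      · exact (intervalIntegral.continuous_parametric_intervalIntegral_of_continuous'
          (f := fun t x => H.Phi t x (μ t) * H.Phi (-t) x (μ t)) (hP.mul hP2) 0 1).continuousAt
      · exact ((Complex.continuous_ofReal.comp (Real.continuous_sqrt.comp hNcont)).mul
          (Complex.continuous_ofReal.comp (Real.continuous_sqrt.comp hN2cont))).continuousAt
      · exact mul_ne_zero (Complex.ofReal_ne_zero.2 (ne_of_gt (Real.sqrt_pos.2 hN0)))
          (Complex.ofReal_ne_zero.2 (ne_of_gt (Real.sqrt_pos.2 hN20)))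
    refine hAcont.congr ?_
    have hev : ∀ᶠ t in nhds (0:ℝ), |t| < min ε c := by
      filter_upwards [Metric.ball_mem_nhds (0:ℝ) (lt_min hε0 hc0)] with t ht
      simpa [Real.dist_eq] using ht
    filter_upwards [hev] with t ht
    have htc : |t| ≤ c := le_of_lt (lt_of_lt_of_le ht (min_le_right _ _))
    have htε : t ∈ Metric.ball (0:ℝ) ε := by
      simp [Real.dist_eq, lt_of_lt_of_le ht (min_le_left _ _)]
    obtain ⟨h1, h2⟩ := hball htε
    have hn1 : l2norm (fun s => H.Phi t s (lamn t)) ≠ 0 := by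
      rw [key1 t htc]; exact ne_of_gt (Real.sqrt_pos.2 h1)
    have hn2 : l2norm (fun s => H.Phi (-t) s (lamn t)) ≠ 0 := by
      rw [key2 t htc]; exact ne_of_gt (Real.sqrt_pos.2 h2)
    have hn1' : (l2norm (fun s => H.Phi t s (lamn t)) ≠ 0) = True := eq_true hn1
    have hn2' : (l2norm (fun s => H.Phi (-t) s (lamn t)) ≠ 0) = True := eq_true hn2
    have hlam : lamn t = μ t := (hμeq t htc).symm
    symm
    calc H.alpha lamn t
        = ∫ x in (0:ℝ)..1, (H.Phi t x (μ t) * H.Phi (-t) x (μ t)) /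
            ((Real.sqrt (N t) : ℂ) * (Real.sqrt (N2 t) : ℂ)) := by
          unfold HillContext.alpha HillContext.Psi HillContext.PsiStar
          simp only [hn1', hn2', if_true]
          rw [key1 t htc, key2 t htc]
          congr 1
          funext x
          rw [map_div₀, Complex.conj_conj, Complex.conj_ofReal]
          rw [hlam, div_mul_div_comm]
      _ = A t := intervalIntegral.integral_div _ _


end
end

section
/- Let λ_n : (−δ₀,δ₀) → ℂ be continuous with F(λ_n(t)) = 2cos t for all t, let λ₀ = λ_n(0), and suppose the geometric multiplicity of λ₀ as an eigenvalue of the periodic problem L₀ is 2, i.e. φ(1,λ₀) = 0, θ'(1,λ₀) = 0, θ(1,λ₀) = φ'(1,λ₀) = 1. Assume φ(1,·) is not identically zero. Then there exist δ > 0 and M > 0 such that for every real t with 0 < |t| < δ one has φ(1,λ_n(t)) ≠ 0, ∥Φ_t(·,λ_n(t))∥ ≠ 0, and |Φ_t(x,λ_n(t))| / ∥Φ_t(·,λ_n(t))∥ ≤ M for all x ∈ [0,1]; that is, the normalized eigenfunction Ψ_{n,t}(x) is bounded on a punctured neighborhood of t = 0. -/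
open MeasureTheory Set
open scoped Real Classical

noncomputable section

/-- Linear independence of `θ(·,μ)` and `φ(·,μ)` in `L²(0,1)`, quantitatively:
if `(c,d) ≠ (0,0)` then `∫₀¹ ‖c θ(x,μ) + d φ(x,μ)‖² dx > 0`. -/
theorem hill_L2_pos (H : HillContext) (μ c d : ℂ) (hcd : ¬(c = 0 ∧ d = 0)) :
    0 < ∫ x in (0:ℝ)..1, ‖c * H.θ x μ + d * H.φ x μ‖ ^ 2 := by
  set h : ℝ → ℂ := fun x => c * H.θ x μ + d * H.φ x μ with hh
  have hθc : Continuous fun x : ℝ => H.θ x μ :=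
    H.θ_cont.comp (continuous_id.prodMk continuous_const)
  have hφc : Continuous fun x : ℝ => H.φ x μ :=
    H.φ_cont.comp (continuous_id.prodMk continuous_const)
  have hφdc : Continuous fun x : ℝ => H.φd x μ :=
    H.φd_cont.comp (continuous_id.prodMk continuous_const)
  have hhc : Continuous h := ((continuous_const.mul hθc).add (continuous_const.mul hφc))
  set g : ℝ → ℝ := fun x => ‖h x‖ ^ 2 with hg
  have hgc : Continuous g := hhc.norm.pow 2
  -- there is a point of `Ioo 0 1` where `h` is nonzero
  have hex : ∃ x₀ ∈ Ioo (0:ℝ) 1, h x₀ ≠ 0 := by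
    by_contra hcon
    push_neg at hcon
    -- first, `h 0 = 0` by continuity, hence `c = 0`
    have h0 : h 0 = 0 := by
      have h1 : Filter.Tendsto h (nhdsWithin 0 (Ioi 0)) (nhds (h 0)) :=
        (hhc.tendsto 0).mono_left nhdsWithin_le_nhds
      have h2 : Filter.Tendsto h (nhdsWithin 0 (Ioi 0)) (nhds 0) := by
        have : ∀ᶠ x in nhdsWithin (0:ℝ) (Ioi 0), h x = 0 := by
          filter_upwards [Ioo_mem_nhdsGT_of_mem (by norm_num : (0:ℝ) ∈ Ico (0:ℝ) 1)] with x hx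
          exact hcon x hx
        exact Filter.Tendsto.congr' (Filter.EventuallyEq.symm this) tendsto_const_nhds
      exact tendsto_nhds_unique h1 h2
    have hc0 : c = 0 := by
      have := h0
      simp only [hh, H.θ_init, H.φ_init, mul_one, mul_zero, add_zero] at this
      exact this
    -- hence `d ≠ 0` and `φ(x,μ) = 0` on `Ioo 0 1`
    have hd0 : d ≠ 0 := fun hd => hcd ⟨hc0, hd⟩
    have hφ0 : ∀ x ∈ Ioo (0:ℝ) 1, H.φ x μ = 0 := by
      intro x hx
      have := hcon x hx
      simp only [hh, hc0, zero_mul, zero_add] at this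
      exact (mul_eq_zero.1 this).resolve_left hd0
    -- but `φ(x,μ) ≈ x ≠ 0` for small positive `x`
    obtain ⟨η, hηpos, hη⟩ := Metric.continuousAt_iff.1 (hφdc.continuousAt (x := 0))
      (1/2) (by norm_num)
    set x₁ : ℝ := min (η/2) (1/2) with hx₁def
    have hx₁pos : 0 < x₁ := lt_min (by linarith) (by norm_num)
    have hx₁mem : x₁ ∈ Ioo (0:ℝ) 1 :=
      ⟨hx₁pos, lt_of_le_of_lt (min_le_right _ _) (by norm_num)⟩
    have hint : IntervalIntegrable (fun s => H.φd s μ) volume 0 x₁ :=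
      hφdc.intervalIntegrable _ _
    have hrepr : H.φ x₁ μ = ∫ s in (0:ℝ)..x₁, H.φd s μ := by
      have := (H.sol_φ μ).y_eq x₁ ⟨hx₁pos.le, hx₁mem.2.le⟩
      simpa [H.φ_init] using this
    have hsplit : (∫ s in (0:ℝ)..x₁, H.φd s μ)
        = (x₁ : ℂ) + ∫ s in (0:ℝ)..x₁, (H.φd s μ - 1) := by
      rw [intervalIntegral.integral_sub hint (intervalIntegrable_const)]
      simp
    have hbound : ‖∫ s in (0:ℝ)..x₁, (H.φd s μ - 1)‖ ≤ (1/2) * |x₁ - 0| := by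
      apply intervalIntegral.norm_integral_le_of_norm_le_const
      intro s hs
      rw [uIoc_of_le hx₁pos.le] at hs
      have hsη : dist s 0 < η := by
        rw [Real.dist_eq, sub_zero, abs_of_pos hs.1]
        calc s ≤ x₁ := hs.2
        _ ≤ η/2 := min_le_left _ _
        _ < η := by linarith
      have := hη hsη
      rw [H.φd_init] at this
      rw [dist_eq_norm] at this
      exact this.le
    have : H.φ x₁ μ ≠ 0 := by
      rw [hrepr, hsplit]
      intro habs
      have h1 : ‖(x₁ : ℂ)‖ ≤ ‖∫ s in (0:ℝ)..x₁, (H.φd s μ - 1)‖ := by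
        have : (x₁ : ℂ) = -(∫ s in (0:ℝ)..x₁, (H.φd s μ - 1)) := by
          linear_combination habs
        rw [this, norm_neg]
      have h2 : ‖(x₁ : ℂ)‖ = x₁ := by
        rw [Complex.norm_real, Real.norm_eq_abs, abs_of_pos hx₁pos]
      rw [h2] at h1
      rw [sub_zero, abs_of_pos hx₁pos] at hbound
      linarith
    exact this (hφ0 x₁ hx₁mem)
  obtain ⟨x₀, hx₀, hhx₀⟩ := hex
  -- conclude positivity of the integral
  rw [intervalIntegral.integral_pos_iff_support_of_nonneg_ae'
    (Filter.Eventually.of_forall (fun x => by positivity))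
    (hgc.intervalIntegrable _ _)]
  refine ⟨by norm_num, ?_⟩
  have hopen : IsOpen (Function.support g ∩ Ioo 0 1) :=
    (hgc.isOpen_support).inter isOpen_Ioo
  have hne : (Function.support g ∩ Ioo 0 1).Nonempty := by
    refine ⟨x₀, ?_, hx₀⟩
    simp only [Function.mem_support, hg]
    exact pow_ne_zero _ (norm_ne_zero_iff.2 hhx₀)
  calc (0:ENNReal) < volume (Function.support g ∩ Ioo 0 1) := hopen.measure_pos volume hne
  _ ≤ volume (Function.support g ∩ Ioc 0 1) :=
      measure_mono (inter_subset_inter_right _ Ioo_subset_Ioc_self)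


/-- Uniform lower bound for the `L²` norm of unit-coefficient combinations of `θ`, `φ`
with the spectral parameter ranging over a compact set. -/
theorem hill_L2_min (H : HillContext) (K : Set ℂ) (hK : IsCompact K) (hKne : K.Nonempty) :
    ∃ ε : ℝ, 0 < ε ∧ ∀ μ ∈ K, ∀ c d : ℂ, ‖((c, d) : ℂ × ℂ)‖ = 1 →
      ε ≤ ∫ x in (0:ℝ)..1, ‖c * H.θ x μ + d * H.φ x μ‖ ^ 2 := by
  have hNcont : Continuous fun p : ℂ × ℂ × ℂ =>
      ∫ x in (0:ℝ)..1, ‖p.2.1 * H.θ x p.1 + p.2.2 * H.φ x p.1‖ ^ 2 := by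
    have h1 : Continuous fun q : (ℂ × ℂ × ℂ) × ℝ => H.θ q.2 q.1.1 :=
      H.θ_cont.comp (continuous_snd.prodMk continuous_fst.fst)
    have h2 : Continuous fun q : (ℂ × ℂ × ℂ) × ℝ => H.φ q.2 q.1.1 :=
      H.φ_cont.comp (continuous_snd.prodMk continuous_fst.fst)
    have hf : Continuous (Function.uncurry fun (p : ℂ × ℂ × ℂ) (x : ℝ) =>
        ‖p.2.1 * H.θ x p.1 + p.2.2 * H.φ x p.1‖ ^ 2) :=
      (((continuous_fst.snd.fst.mul h1).add (continuous_fst.snd.snd.mul h2)).norm).pow 2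
    exact intervalIntegral.continuous_parametric_intervalIntegral_of_continuous' hf 0 1
  have hTcpt : IsCompact (K ×ˢ (Metric.sphere (0 : ℂ × ℂ) 1)) := hK.prod (isCompact_sphere _ _)
  have hTne : (K ×ˢ (Metric.sphere (0 : ℂ × ℂ) 1)).Nonempty := by
    obtain ⟨z, hz⟩ := hKne
    refine ⟨(z, (1, 0)), hz, ?_⟩
    rw [mem_sphere_zero_iff_norm]
    simp [Prod.norm_def]
  obtain ⟨p₀, hp₀T, hp₀min⟩ := hTcpt.exists_isMinOn hTne hNcont.continuousOn
  refine ⟨∫ x in (0:ℝ)..1, ‖p₀.2.1 * H.θ x p₀.1 + p₀.2.2 * H.φ x p₀.1‖ ^ 2, ?_, ?_⟩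
  · apply hill_L2_pos H p₀.1 p₀.2.1 p₀.2.2
    rintro ⟨hc, hd⟩
    have h1 := hp₀T.2
    rw [mem_sphere_zero_iff_norm] at h1
    have hp : p₀.2 = ((0 : ℂ), (0 : ℂ)) := Prod.ext hc hd
    rw [hp] at h1
    simp [Prod.norm_def] at h1
  · intro μ hμ c d hcd
    exact isMinOn_iff.1 hp₀min (μ, (c, d)) (Set.mk_mem_prod hμ (mem_sphere_zero_iff_norm.2 hcd))

set_option maxHeartbeats 1000000 in
/-- (Lemma 1(c).)  Let `λ_n : (-δ₀,δ₀) → ℂ` be continuous with `F(λ_n(t)) = 2 cos t`, let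
`λ₀ = λ_n(0)` and suppose the geometric multiplicity of `λ₀` as an eigenvalue of the
periodic problem `L₀` is `2`, i.e. `φ(1,λ₀) = 0`, `θ'(1,λ₀) = 0`, `θ(1,λ₀) = φ'(1,λ₀) = 1`.
Assume `φ(1,·)` is not identically zero.  Then there exist `δ > 0` and `M > 0` such that
for all real `t` with `0 < |t| < δ` one has `φ(1,λ_n(t)) ≠ 0`, `∥Φ_t(·,λ_n(t))∥ ≠ 0` and
`|Φ_t(x,λ_n(t))| / ∥Φ_t(·,λ_n(t))∥ ≤ M` for all `x ∈ [0,1]`: the normalized eigenfunction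
is bounded on a punctured neighborhood of `t = 0`. -/
theorem Psi_bounded_near_zero (H : HillContext) (δ₀ : ℝ) (hδ₀ : 0 < δ₀)
    (lamn : ℝ → ℂ) (hcont : ContinuousOn lamn (Ioo (-δ₀) δ₀))
    (hF : ∀ t ∈ Ioo (-δ₀) δ₀, H.F (lamn t) = 2 * (Real.cos t : ℂ))
    (hφ0 : H.φ 1 (lamn 0) = 0) (hθd0 : H.θd 1 (lamn 0) = 0)
    (hθ0 : H.θ 1 (lamn 0) = 1) (hφd0 : H.φd 1 (lamn 0) = 1)
    (hφ_ne : ∃ mu : ℂ, H.φ 1 mu ≠ 0) :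
    ∃ δ M : ℝ, 0 < δ ∧ δ ≤ δ₀ ∧ 0 < M ∧
      ∀ t : ℝ, 0 < |t| → |t| < δ →
        H.φ 1 (lamn t) ≠ 0 ∧
        l2norm (fun s => H.Phi t s (lamn t)) ≠ 0 ∧
        ∀ x ∈ Icc (0:ℝ) 1,
          ‖H.Phi t x (lamn t)‖ / l2norm (fun s => H.Phi t s (lamn t)) ≤ M := by
  set lam0 := lamn 0 with hlam0def
  -- zeros of `φ(1,·)` are isolated near `lam0`
  have hana : ∀ z : ℂ, AnalyticAt ℂ (fun μ => H.φ 1 μ) z := fun z =>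
    (H.φ_entire 1).analyticAt z
  have hiso : ∀ᶠ μ in nhdsWithin lam0 {lam0}ᶜ, H.φ 1 μ ≠ 0 := by
    rcases (hana lam0).eventually_eq_zero_or_eventually_ne_zero with h | h
    · exfalso
      obtain ⟨mu, hmu⟩ := hφ_ne
      have hOn : AnalyticOnNhd ℂ (fun μ => H.φ 1 μ) univ := fun z _ => hana z
      have := hOn.eqOn_zero_of_preconnected_of_eventuallyEq_zero
        isPreconnected_univ (mem_univ lam0) h
      exact hmu (this (mem_univ mu))
    · exact h
  rw [eventually_nhdsWithin_iff] at hiso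
  rw [Metric.eventually_nhds_iff] at hiso
  obtain ⟨r, hrpos, hr⟩ := hiso
  -- uniform bounds for `θ` and `φ` on `[0,1] × closedBall lam0 r`
  set K := Metric.closedBall lam0 r with hKdef
  have hKcpt : IsCompact K := isCompact_closedBall _ _
  have hKne : lam0 ∈ K := Metric.mem_closedBall_self hrpos.le
  have hIK : IsCompact (Icc (0:ℝ) 1 ×ˢ K) := isCompact_Icc.prod hKcpt
  have hIKne : (Icc (0:ℝ) 1 ×ˢ K).Nonempty := ⟨(0, lam0), by norm_num, hKne⟩
  obtain ⟨pθ, -, hpθ⟩ := hIK.exists_isMaxOn hIKne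
    (H.θ_cont.norm.continuousOn : ContinuousOn (fun p : ℝ × ℂ => ‖H.θ p.1 p.2‖) _)
  obtain ⟨pφ, -, hpφ⟩ := hIK.exists_isMaxOn hIKne
    (H.φ_cont.norm.continuousOn : ContinuousOn (fun p : ℝ × ℂ => ‖H.φ p.1 p.2‖) _)
  set Cθ := ‖H.θ pθ.1 pθ.2‖ with hCθdef
  set Cφ := ‖H.φ pφ.1 pφ.2‖ with hCφdef
  have hCθ : ∀ x ∈ Icc (0:ℝ) 1, ∀ μ ∈ K, ‖H.θ x μ‖ ≤ Cθ := fun x hx μ hμ =>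
    hpθ (Set.mk_mem_prod hx hμ)
  have hCφ : ∀ x ∈ Icc (0:ℝ) 1, ∀ μ ∈ K, ‖H.φ x μ‖ ≤ Cφ := fun x hx μ hμ =>
    hpφ (Set.mk_mem_prod hx hμ)
  have hCθ0 : 0 ≤ Cθ := norm_nonneg _
  have hCφ0 : 0 ≤ Cφ := norm_nonneg _
  -- a uniform lower bound for the `L²` norm of unit combinations
  obtain ⟨ε, hεpos, hεmin⟩ := hill_L2_min H K hKcpt ⟨lam0, hKne⟩
  -- continuity of `lamn` at `0`
  have h0mem : (0:ℝ) ∈ Ioo (-δ₀) δ₀ := ⟨by linarith, hδ₀⟩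
  have hca : ContinuousAt lamn 0 :=
    hcont.continuousAt (Ioo_mem_nhds h0mem.1 h0mem.2)
  obtain ⟨δ₁, hδ₁pos, hδ₁⟩ := Metric.continuousAt_iff.1 hca r hrpos
  -- choose `δ` and `M`
  refine ⟨min (min δ₁ δ₀) 1, (Cθ + Cφ + 1) / Real.sqrt ε,
    lt_min (lt_min hδ₁pos hδ₀) one_pos, (min_le_left _ _).trans (min_le_right _ _),
    div_pos (by linarith) (Real.sqrt_pos.2 hεpos), ?_⟩
  intro t ht0 htδ
  have htδ₁ : |t| < δ₁ := lt_of_lt_of_le htδ ((min_le_left _ _).trans (min_le_left _ _))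
  have htδ₀ : |t| < δ₀ := lt_of_lt_of_le htδ ((min_le_left _ _).trans (min_le_right _ _))
  have ht1 : |t| < 1 := lt_of_lt_of_le htδ (min_le_right _ _)
  have htIoo : t ∈ Ioo (-δ₀) δ₀ := by
    rw [mem_Ioo]; constructor <;> [linarith [neg_abs_le t]; linarith [le_abs_self t]]
  set μ := lamn t with hμdef
  have hμK' : dist μ lam0 < r := hδ₁ (by simpa [Real.dist_eq] using htδ₁)
  have hμK : μ ∈ K := Metric.mem_closedBall.2 hμK'.le
  -- `μ ≠ lam0` since the discriminant values differ
  have hμne : μ ≠ lam0 := by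
    intro habs
    have hFt := hF t htIoo
    rw [← hμdef, habs] at hFt
    have hF0 : H.F lam0 = 2 := by
      rw [HillContext.F, hθ0, hφd0]; norm_num
    rw [hF0] at hFt
    have : (Real.cos t : ℂ) = 1 := by
      field_simp at hFt
      exact_mod_cast hFt.symm
    have hcos : Real.cos t = 1 := by exact_mod_cast this
    have hπ : (3:ℝ) < Real.pi := Real.pi_gt_three
    have := (Real.cos_eq_one_iff_of_lt_of_lt (x := t)
      (by nlinarith [neg_abs_le t]) (by nlinarith [le_abs_self t])).1 hcos
    rw [this] at ht0
    simp at ht0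
  have hφne : H.φ 1 μ ≠ 0 := hr hμK' hμne
  refine ⟨hφne, ?_⟩
  -- set up the coefficients
  set c := H.φ 1 μ with hcdef
  set d := Complex.exp (Complex.I * t) - H.θ 1 μ with hddef
  set n := ‖((c, d) : ℂ × ℂ)‖ with hndef
  have hnpos : 0 < n := lt_of_lt_of_le (norm_pos_iff.2 hφne) (norm_fst_le ((c, d) : ℂ × ℂ))
  have hcn : ‖c‖ ≤ n := norm_fst_le ((c, d) : ℂ × ℂ)
  have hdn : ‖d‖ ≤ n := norm_snd_le ((c, d) : ℂ × ℂ)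
  have hnC : ‖((n:ℝ) : ℂ)‖ = n := by
    rw [Complex.norm_real, Real.norm_eq_abs, abs_of_pos hnpos]
  -- scaled unit vector
  have hu1 : ‖(((n:ℂ)⁻¹ * c, (n:ℂ)⁻¹ * d) : ℂ × ℂ)‖ = 1 := by
    have : (((n:ℂ)⁻¹ * c, (n:ℂ)⁻¹ * d) : ℂ × ℂ) = ((n:ℂ)⁻¹) • ((c, d) : ℂ × ℂ) := by
      simp [Prod.smul_mk, smul_eq_mul]
    rw [this, norm_smul, norm_inv, hnC, ← hndef, inv_mul_cancel₀ hnpos.ne']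
  -- pointwise identity between `Φ_t` and the linear combination
  have hPhi : ∀ x : ℝ, H.Phi t x μ = c * H.θ x μ + d * H.φ x μ := fun x => rfl
  -- the squared `L²` norm identity
  have hintid : (∫ x in (0:ℝ)..1, ‖H.Phi t x μ‖ ^ 2)
      = n ^ 2 * ∫ x in (0:ℝ)..1,
          ‖(n:ℂ)⁻¹ * c * H.θ x μ + (n:ℂ)⁻¹ * d * H.φ x μ‖ ^ 2 := by
    rw [← intervalIntegral.integral_const_mul]
    apply intervalIntegral.integral_congr
    intro x _
    dsimp only
    rw [hPhi x]
    have hfac : (n:ℂ)⁻¹ * c * H.θ x μ + (n:ℂ)⁻¹ * d * H.φ x μ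
        = (n:ℂ)⁻¹ * (c * H.θ x μ + d * H.φ x μ) := by ring
    rw [hfac, norm_mul, norm_inv, hnC, mul_pow]
    field_simp
  have hNge : ε ≤ ∫ x in (0:ℝ)..1,
      ‖(n:ℂ)⁻¹ * c * H.θ x μ + (n:ℂ)⁻¹ * d * H.φ x μ‖ ^ 2 :=
    hεmin μ hμK ((n:ℂ)⁻¹ * c) ((n:ℂ)⁻¹ * d) hu1
  have hintge : n ^ 2 * ε ≤ ∫ x in (0:ℝ)..1, ‖H.Phi t x μ‖ ^ 2 := by
    rw [hintid]
    exact mul_le_mul_of_nonneg_left hNge (by positivity)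
  -- lower bound on the `L²` norm
  have hl2ge : n * Real.sqrt ε ≤ l2norm (fun s => H.Phi t s μ) := by
    rw [l2norm]
    have : n * Real.sqrt ε = Real.sqrt (n ^ 2 * ε) := by
      rw [Real.sqrt_mul (by positivity), Real.sqrt_sq hnpos.le]
    rw [this]
    exact Real.sqrt_le_sqrt hintge
  have hl2pos : 0 < l2norm (fun s => H.Phi t s μ) :=
    lt_of_lt_of_le (by positivity) hl2ge
  refine ⟨hl2pos.ne', ?_⟩
  intro x hx
  -- upper bound on the numerator
  have hnum : ‖H.Phi t x μ‖ ≤ n * (Cθ + Cφ + 1) := by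
    rw [hPhi x]
    calc ‖c * H.θ x μ + d * H.φ x μ‖ ≤ ‖c * H.θ x μ‖ + ‖d * H.φ x μ‖ := norm_add_le _ _
    _ = ‖c‖ * ‖H.θ x μ‖ + ‖d‖ * ‖H.φ x μ‖ := by rw [norm_mul, norm_mul]
    _ ≤ n * Cθ + n * Cφ := by
        gcongr
        · exact hCθ x hx μ hμK
        · exact hCφ x hx μ hμK
    _ ≤ n * (Cθ + Cφ + 1) := by nlinarith
  calc ‖H.Phi t x μ‖ / l2norm (fun s => H.Phi t s μ)
      ≤ (n * (Cθ + Cφ + 1)) / (n * Real.sqrt ε) := by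
        apply div_le_div₀ (by positivity) hnum (by positivity) hl2ge
  _ = (Cθ + Cφ + 1) / Real.sqrt ε := by
        rw [mul_div_mul_left _ _ hnpos.ne']

end
end

section
/- Let t₀ ∈ (0,π), m ≥ 2, and let λ₀ ∈ ℂ be an eigenvalue of L_{t₀} of multiplicity m, i.e. F(λ₀) = 2cos t₀, F^{(j)}(λ₀) = 0 for 1 ≤ j ≤ m−1, and F^{(m)}(λ₀) ≠ 0. Let λ_k : I → ℂ be continuous on an open real interval I containing t₀, with λ_k(t₀) = λ₀ and F(λ_k(t)) = 2cos t for all t ∈ I. Then there exist δ, c₁, c₂ > 0 such that c₁|t − t₀|^{1/m} ≤ |λ_k(t) − λ₀| ≤ c₂|t − t₀|^{1/m} for all t ∈ I with 0 < |t − t₀| ≤ δ; moreover, after shrinking δ, F'(λ_k(t)) ≠ 0 for 0 < |t − t₀| ≤ δ (so λ_k(t) is a simple eigenvalue of L_t). -/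
open MeasureTheory Set
open scoped Real Classical

noncomputable section

open Filter in
private lemma hillAux_coeff_factorial {f : ℂ → ℂ} {z₀ : ℂ} {q : FormalMultilinearSeries ℂ ℂ ℂ}
    (hq : HasFPowerSeriesAt f q z₀) (n : ℕ) :
    (Nat.factorial n : ℂ) * q.coeff n = iteratedDeriv n f z₀ := by
  obtain ⟨r, hr⟩ := hq
  have h := hr.factorial_smul (1 : ℂ) n
  rw [iteratedDeriv_eq_iteratedFDeriv, ← h, nsmul_eq_mul]
  rfl

open Filter in
private lemma hillAux_factor {f : ℂ → ℂ} {z₀ : ℂ} {m : ℕ} (hf : AnalyticAt ℂ f z₀) (hm : 1 ≤ m)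
    (h0 : f z₀ = 0) (hj : ∀ j, 1 ≤ j → j < m → iteratedDeriv j f z₀ = 0)
    (hm' : iteratedDeriv m f z₀ ≠ 0) :
    ∃ g : ℂ → ℂ, AnalyticAt ℂ g z₀ ∧ g z₀ ≠ 0 ∧
      ∀ᶠ z in nhds z₀, f z = (z - z₀) ^ m * g z := by
  obtain ⟨q, hq⟩ := hf
  have hco : ∀ n, (Nat.factorial n : ℂ) * q.coeff n = iteratedDeriv n f z₀ :=
    hillAux_coeff_factorial hq
  have hzero : ∀ j, j < m → q j = 0 := by
    intro j hjm
    rw [← FormalMultilinearSeries.coeff_eq_zero]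
    have h1 : (Nat.factorial j : ℂ) ≠ 0 := by exact_mod_cast Nat.factorial_ne_zero j
    have h2 : (Nat.factorial j : ℂ) * q.coeff j = 0 := by
      rw [hco j]
      rcases Nat.eq_zero_or_pos j with h | h
      · simp [h, h0]
      · exact hj j h hjm
    exact (mul_eq_zero.mp h2).resolve_left h1
  have hqm : q m ≠ 0 := by
    intro h
    apply hm'
    rw [← hco m, FormalMultilinearSeries.coeff_eq_zero.mpr h, mul_zero]
  have hqne : q ≠ 0 := FormalMultilinearSeries.ne_iff.mpr ⟨m, hqm⟩
  have horder : q.order = m := by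
    refine le_antisymm (Nat.sInf_le hqm) (le_of_not_gt fun h => ?_)
    exact q.apply_order_ne_zero hqne (hzero _ h)
  refine ⟨(Function.swap dslope z₀)^[m] f,
    ⟨_, hq.has_fpower_series_iterate_dslope_fslope m⟩, ?_, ?_⟩
  · have := hq.iterate_dslope_fslope_ne_zero hqne
    rwa [horder] at this
  · have := hq.eq_pow_order_mul_iterate_dslope
    rw [horder] at this
    filter_upwards [Filter.Eventually.of_forall this] with z hz
    rw [hz, smul_eq_mul]

private lemma hillAux_iteratedDeriv_sub_const (f : ℂ → ℂ) (c : ℂ) (n : ℕ) (hn : 1 ≤ n) :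
    iteratedDeriv n (fun z => f z - c) = iteratedDeriv n f := by
  obtain ⟨k, rfl⟩ : ∃ k, n = k + 1 := ⟨n - 1, by omega⟩
  rw [iteratedDeriv_succ', iteratedDeriv_succ']
  have h : deriv (fun z => f z - c) = deriv f := funext fun z => deriv_sub_const c
  rw [h]

private lemma hillAux_iteratedDeriv_zero_fun (n : ℕ) :
    iteratedDeriv n (fun _ : ℂ => (0 : ℂ)) = fun _ => 0 := by
  induction n with
  | zero => simp [iteratedDeriv_zero]
  | succ k ih =>
    rw [iteratedDeriv_succ, ih]
    funext z
    simp

private lemma hillAux_pow_bound_le {x u C : ℝ} {m : ℕ} (hm : 1 ≤ m) (hx : 0 ≤ x) (hu : 0 ≤ u)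
    (hC : 0 ≤ C) (h : x ^ m ≤ C * u) : x ≤ C ^ ((1:ℝ)/m) * u ^ ((1:ℝ)/m) := by
  have hm0 : (m : ℝ) ≠ 0 := by positivity
  calc x = (x ^ m) ^ ((1:ℝ)/m) := by
        rw [← Real.rpow_natCast x m, ← Real.rpow_mul hx, mul_one_div, div_self hm0,
          Real.rpow_one]
    _ ≤ (C * u) ^ ((1:ℝ)/m) := Real.rpow_le_rpow (by positivity) h (by positivity)
    _ = C ^ ((1:ℝ)/m) * u ^ ((1:ℝ)/m) := Real.mul_rpow hC hu

private lemma hillAux_le_pow_bound {x u C : ℝ} {m : ℕ} (hm : 1 ≤ m) (hx : 0 ≤ x) (hu : 0 ≤ u)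
    (hC : 0 ≤ C) (h : C * u ≤ x ^ m) : C ^ ((1:ℝ)/m) * u ^ ((1:ℝ)/m) ≤ x := by
  have hm0 : (m : ℝ) ≠ 0 := by positivity
  calc C ^ ((1:ℝ)/m) * u ^ ((1:ℝ)/m) = (C * u) ^ ((1:ℝ)/m) := (Real.mul_rpow hC hu).symm
    _ ≤ (x ^ m) ^ ((1:ℝ)/m) := Real.rpow_le_rpow (by positivity) h (by positivity)
    _ = x := by
        rw [← Real.rpow_natCast x m, ← Real.rpow_mul hx, mul_one_div, div_self hm0,
          Real.rpow_one]

/-- (Proposition 3(a), case `t₀ ≠ 0, π`.)  Let `t₀ ∈ (0,π)`, `m ≥ 2` and let `λ₀` be an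
eigenvalue of `L_{t₀}` of multiplicity `m`: `F(λ₀) = 2 cos t₀`, `F⁽ʲ⁾(λ₀) = 0` for
`1 ≤ j ≤ m-1`, `F⁽ᵐ⁾(λ₀) ≠ 0`.  If `λ_k` is a continuous branch on an open interval
`(a,b) ∋ t₀` with `λ_k(t₀) = λ₀` and `F(λ_k(t)) = 2 cos t`, then
`λ_k(t) - λ₀ ∼ (t - t₀)^{1/m}` as `t → t₀`, and for `t` near (but distinct from) `t₀` the
eigenvalue `λ_k(t)` is simple, i.e. `F'(λ_k(t)) ≠ 0`. -/
theorem eigenvalue_branch_asymptotics_interior (H : HillContext)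
    (t₀ : ℝ) (ht₀ : t₀ ∈ Ioo 0 π) (m : ℕ) (hm : 2 ≤ m) (lam₀ : ℂ)
    (hF0 : H.F lam₀ = 2 * (Real.cos t₀ : ℂ))
    (hFj : ∀ j : ℕ, 1 ≤ j → j ≤ m - 1 → iteratedDeriv j H.F lam₀ = 0)
    (hFm : iteratedDeriv m H.F lam₀ ≠ 0)
    (a b : ℝ) (ha : a < t₀) (hb : t₀ < b)
    (lamk : ℝ → ℂ) (hcont : ContinuousOn lamk (Ioo a b))
    (hk0 : lamk t₀ = lam₀)
    (hFk : ∀ t ∈ Ioo a b, H.F (lamk t) = 2 * (Real.cos t : ℂ)) :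
    ∃ δ c₁ c₂ : ℝ, 0 < δ ∧ 0 < c₁ ∧ 0 < c₂ ∧
      (∀ t ∈ Ioo a b, 0 < |t - t₀| → |t - t₀| ≤ δ →
        c₁ * |t - t₀| ^ ((1 : ℝ) / (m : ℝ)) ≤ ‖lamk t - lam₀‖ ∧
        ‖lamk t - lam₀‖ ≤ c₂ * |t - t₀| ^ ((1 : ℝ) / (m : ℝ))) ∧
      ∃ δ' : ℝ, 0 < δ' ∧ δ' ≤ δ ∧
        ∀ t ∈ Ioo a b, 0 < |t - t₀| → |t - t₀| ≤ δ' → deriv H.F (lamk t) ≠ 0 := by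
  classical
  obtain ⟨ht0, ht0'⟩ := ht₀
  have hspos : 0 < Real.sin t₀ := Real.sin_pos_of_pos_of_lt_pi ht0 ht0'
  have hm1 : 1 ≤ m := le_trans one_le_two hm
  have hFdiff : Differentiable ℂ H.F := (H.θ_entire 1).add (H.φd_entire 1)
  have hFan : AnalyticAt ℂ H.F lam₀ := hFdiff.analyticAt lam₀
  set c : ℂ := 2 * (Real.cos t₀ : ℂ) with hcdef
  have hhan : AnalyticAt ℂ (fun z => H.F z - c) lam₀ := hFan.sub analyticAt_const
  obtain ⟨g, hgan, hg0, hgev⟩ := hillAux_factor hhan hm1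
    (by simp [hF0])
    (fun j h1 h2 => by
      rw [hillAux_iteratedDeriv_sub_const H.F c j h1]
      exact hFj j h1 (by omega))
    (by rw [hillAux_iteratedDeriv_sub_const H.F c m hm1]; exact hFm)
  have hgn0 : 0 < ‖g lam₀‖ := norm_pos_iff.mpr hg0
  set A : ℝ := ‖g lam₀‖ / 2 with hAdef
  set B : ℝ := 2 * ‖g lam₀‖ with hBdef
  have hApos : 0 < A := by rw [hAdef]; linarith
  have hBpos : 0 < B := by rw [hBdef]; linarith
  have hev2 : ∀ᶠ z in nhds lam₀,
      H.F z - c = (z - lam₀) ^ m * g z ∧ A ≤ ‖g z‖ ∧ ‖g z‖ ≤ B := by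
    have hgc : Filter.Tendsto g (nhds lam₀) (nhds (g lam₀)) := hgan.continuousAt
    filter_upwards [hgev, hgc (Metric.ball_mem_nhds (g lam₀) hApos)] with z h1 h2
    have h3 : ‖g z - g lam₀‖ < A := by
      rw [Set.mem_preimage, Metric.mem_ball, dist_eq_norm] at h2
      exact h2
    have h5 : |‖g z‖ - ‖g lam₀‖| < A := lt_of_le_of_lt (abs_norm_sub_norm_le _ _) h3
    rw [abs_lt] at h5
    exact ⟨h1, by rw [hAdef] at *; linarith [h5.1], by rw [hBdef] at *; linarith [h5.2]⟩
  rw [Metric.eventually_nhds_iff] at hev2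
  obtain ⟨ε, hεpos, hballε⟩ := hev2
  -- the derivative of F does not vanish in a punctured neighborhood of lam₀
  have hFon : AnalyticOnNhd ℂ H.F Set.univ := fun z _ => hFdiff.analyticAt z
  have hDan : AnalyticAt ℂ (deriv H.F) lam₀ := hFon.deriv lam₀ (Set.mem_univ _)
  have hDne : ∀ᶠ z in nhdsWithin lam₀ {lam₀}ᶜ, deriv H.F z ≠ 0 := by
    rcases hDan.eventually_eq_zero_or_eventually_ne_zero with h | h
    · exfalso
      apply hFm
      have h2 : iteratedDeriv (m - 1) (deriv H.F) lam₀
          = iteratedDeriv (m - 1) (fun _ : ℂ => (0 : ℂ)) lam₀ :=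
        Filter.EventuallyEq.iteratedDeriv_eq (m - 1) h
      have hm' : m - 1 + 1 = m := by omega
      have h3 : iteratedDeriv m H.F lam₀ = iteratedDeriv (m - 1) (deriv H.F) lam₀ := by
        conv_lhs => rw [← hm']
        rw [iteratedDeriv_succ']
      rw [h3, h2, hillAux_iteratedDeriv_zero_fun]
    · exact h
  rw [eventually_nhdsWithin_iff, Metric.eventually_nhds_iff] at hDne
  obtain ⟨ε', hε'pos, hD⟩ := hDne
  -- continuity of the branch at t₀
  have hck : ContinuousAt lamk t₀ := hcont.continuousAt (Ioo_mem_nhds ha hb)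
  have htend : Filter.Tendsto lamk (nhds t₀) (nhds lam₀) := by
    rw [ContinuousAt, hk0] at hck; exact hck
  have hev3 : ∀ᶠ t in nhds t₀, dist (lamk t) lam₀ < min ε ε' := by
    filter_upwards [htend (Metric.ball_mem_nhds lam₀ (lt_min hεpos hε'pos))] with t ht
    exact Metric.mem_ball.mp ht
  rw [Metric.eventually_nhds_iff] at hev3
  obtain ⟨δ₁, hδ₁pos, h1⟩ := hev3
  -- lower bound for the cosine difference via the derivative
  have hslope : Filter.Tendsto (slope Real.cos t₀) (nhdsWithin t₀ {t₀}ᶜ)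
      (nhds (-Real.sin t₀)) :=
    hasDerivAt_iff_tendsto_slope.mp (Real.hasDerivAt_cos t₀)
  have hopen : ∀ᶠ y in nhds (-Real.sin t₀), Real.sin t₀ / 2 < |y| := by
    have ho : IsOpen {y : ℝ | Real.sin t₀ / 2 < |y|} :=
      isOpen_lt continuous_const continuous_abs
    have hmem : -Real.sin t₀ ∈ {y : ℝ | Real.sin t₀ / 2 < |y|} := by
      simp only [Set.mem_setOf_eq, abs_neg, abs_of_pos hspos]
      linarith
    exact (ho.eventually_mem hmem).mono fun y hy => hy
  have hev4 : ∀ᶠ t in nhdsWithin t₀ {t₀}ᶜ, Real.sin t₀ / 2 < |slope Real.cos t₀ t| :=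
    hslope.eventually hopen
  rw [eventually_nhdsWithin_iff, Metric.eventually_nhds_iff] at hev4
  obtain ⟨δ₂, hδ₂pos, h2⟩ := hev4
  -- global Lipschitz-type upper bound for the cosine difference
  have hcub : ∀ t : ℝ, |Real.cos t - Real.cos t₀| ≤ |t - t₀| := by
    intro t
    rw [Real.cos_sub_cos]
    have hs1 : |Real.sin ((t + t₀) / 2)| ≤ 1 :=
      abs_le.mpr ⟨Real.neg_one_le_sin _, Real.sin_le_one _⟩
    have hs2 : |Real.sin ((t - t₀) / 2)| ≤ |t - t₀| / 2 := by
      have h := Real.abs_sin_le_abs (x := (t - t₀) / 2)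
      rwa [abs_div, abs_two] at h
    calc |(-2) * Real.sin ((t + t₀) / 2) * Real.sin ((t - t₀) / 2)|
        = 2 * |Real.sin ((t + t₀) / 2)| * |Real.sin ((t - t₀) / 2)| := by
          rw [abs_mul, abs_mul, abs_neg, abs_two]
      _ ≤ 2 * 1 * (|t - t₀| / 2) := by
          apply mul_le_mul (by linarith) hs2 (abs_nonneg _) (by norm_num)
      _ = |t - t₀| := by ring
  obtain ⟨δ₃, hδ₃pos, hδ₃a, hδ₃b⟩ : ∃ δ₃ : ℝ, 0 < δ₃ ∧ δ₃ ≤ t₀ / 2 ∧ δ₃ ≤ (π - t₀) / 2 :=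
    ⟨min (t₀ / 2) ((π - t₀) / 2), lt_min (by linarith) (by linarith),
      min_le_left _ _, min_le_right _ _⟩
  refine ⟨min (min (δ₁ / 2) (δ₂ / 2)) δ₃,
    (Real.sin t₀ / B) ^ ((1:ℝ)/m), (2 / A) ^ ((1:ℝ)/m),
    lt_min (lt_min (by linarith) (by linarith)) hδ₃pos,
    Real.rpow_pos_of_pos (div_pos hspos hBpos) _,
    Real.rpow_pos_of_pos (div_pos two_pos hApos) _, ?_, ?_⟩
  · intro t ht htpos htδ
    have huδ1 : |t - t₀| ≤ δ₁ / 2 := le_trans htδ (le_trans (min_le_left _ _) (min_le_left _ _))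
    have huδ2 : |t - t₀| ≤ δ₂ / 2 := le_trans htδ (le_trans (min_le_left _ _) (min_le_right _ _))
    have hdl : dist (lamk t) lam₀ < min ε ε' := h1 (by rw [Real.dist_eq]; linarith)
    obtain ⟨hid, hgl, hgu⟩ := hballε (lt_of_lt_of_le hdl (min_le_left _ _))
    have hFkt : H.F (lamk t) = 2 * (Real.cos t : ℂ) := hFk t ht
    have hne : t ≠ t₀ := sub_ne_zero.mp (abs_pos.mp htpos)
    have hnorm : 2 * |Real.cos t - Real.cos t₀| = ‖lamk t - lam₀‖ ^ m * ‖g (lamk t)‖ := by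
      have h5 := congrArg norm hid
      rw [hFkt] at h5
      have h6 : 2 * (Real.cos t : ℂ) - c = ((2 * Real.cos t - 2 * Real.cos t₀ : ℝ) : ℂ) := by
        rw [hcdef]; push_cast; ring
      rw [h6] at h5
      have h7 : ‖((2 * Real.cos t - 2 * Real.cos t₀ : ℝ) : ℂ)‖
          = 2 * |Real.cos t - Real.cos t₀| := by
        rw [Complex.norm_real, Real.norm_eq_abs]
        have h8 : 2 * Real.cos t - 2 * Real.cos t₀ = 2 * (Real.cos t - Real.cos t₀) := by ring
        rw [h8, abs_mul, abs_two]
      rw [h7, norm_mul, norm_pow] at h5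
      exact h5
    have hslow : Real.sin t₀ / 2 * |t - t₀| < |Real.cos t - Real.cos t₀| := by
      have h8 := h2 (show dist t t₀ < δ₂ by rw [Real.dist_eq]; linarith)
        (by simpa using hne)
      rw [slope_def_field, abs_div] at h8
      calc Real.sin t₀ / 2 * |t - t₀|
          < |Real.cos t - Real.cos t₀| / |t - t₀| * |t - t₀| :=
            mul_lt_mul_of_pos_right h8 htpos
        _ = |Real.cos t - Real.cos t₀| := div_mul_cancel₀ _ (ne_of_gt htpos)
    have hxnn : (0:ℝ) ≤ ‖lamk t - lam₀‖ := norm_nonneg _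
    have hunn : (0:ℝ) ≤ |t - t₀| := abs_nonneg _
    constructor
    · apply hillAux_le_pow_bound hm1 hxnn hunn (le_of_lt (div_pos hspos hBpos))
      rw [div_mul_eq_mul_div, div_le_iff₀ hBpos]
      have e2 : ‖lamk t - lam₀‖ ^ m * ‖g (lamk t)‖ ≤ ‖lamk t - lam₀‖ ^ m * B :=
        mul_le_mul_of_nonneg_left hgu (pow_nonneg hxnn m)
      calc Real.sin t₀ * |t - t₀| ≤ 2 * |Real.cos t - Real.cos t₀| := by linarith
        _ = ‖lamk t - lam₀‖ ^ m * ‖g (lamk t)‖ := hnorm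
        _ ≤ ‖lamk t - lam₀‖ ^ m * B := e2
    · apply hillAux_pow_bound_le hm1 hxnn hunn (le_of_lt (div_pos two_pos hApos))
      rw [div_mul_eq_mul_div, le_div_iff₀ hApos]
      have e3 : ‖lamk t - lam₀‖ ^ m * A ≤ ‖lamk t - lam₀‖ ^ m * ‖g (lamk t)‖ :=
        mul_le_mul_of_nonneg_left hgl (pow_nonneg hxnn m)
      calc ‖lamk t - lam₀‖ ^ m * A ≤ ‖lamk t - lam₀‖ ^ m * ‖g (lamk t)‖ := e3
        _ = 2 * |Real.cos t - Real.cos t₀| := hnorm.symm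
        _ ≤ 2 * |t - t₀| := by linarith [hcub t]
  · refine ⟨min (min (δ₁ / 2) (δ₂ / 2)) δ₃,
      lt_min (lt_min (by linarith) (by linarith)) hδ₃pos, le_refl _, ?_⟩
    intro t ht htpos htδ
    have huδ1 : |t - t₀| ≤ δ₁ / 2 := le_trans htδ (le_trans (min_le_left _ _) (min_le_left _ _))
    have huδ3 : |t - t₀| ≤ δ₃ := le_trans htδ (min_le_right _ _)
    have hdl : dist (lamk t) lam₀ < min ε ε' := h1 (by rw [Real.dist_eq]; linarith)
    obtain ⟨hl, hr⟩ := abs_le.mp huδ3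
    have htIcc : t ∈ Icc 0 π := ⟨by linarith, by linarith⟩
    have hne : t ≠ t₀ := sub_ne_zero.mp (abs_pos.mp htpos)
    have hneq : lamk t ≠ lam₀ := by
      intro h
      have h5 := hFk t ht
      rw [h, hF0] at h5
      rw [hcdef] at h5
      have h7 : (Real.cos t₀ : ℂ) = (Real.cos t : ℂ) :=
        mul_left_cancel₀ (by norm_num : (2:ℂ) ≠ 0) h5
      have h8 : Real.cos t₀ = Real.cos t := by exact_mod_cast h7
      have h9 : t₀ = t := Real.injOn_cos ⟨ht0.le, ht0'.le⟩ htIcc h8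
      exact hne h9.symm
    exact hD (lt_of_lt_of_le hdl (min_le_right _ _)) (by simpa using hneq)


end
end

section
/- Let t₀ ∈ (0,π), m ≥ 2, and let λ₀ ∈ ℂ satisfy F(λ₀) = 2cos t₀, F^{(j)}(λ₀) = 0 for 1 ≤ j ≤ m−1, and F^{(m)}(λ₀) ≠ 0. Let λ_k : I → ℂ be continuous on an open real interval I containing t₀, with λ_k(t₀) = λ₀ and F(λ_k(t)) = 2cos t for all t ∈ I. Then F'(λ_k(t)) ∼ (t − t₀)^{(m−1)/m} as t → t₀, i.e. there exist δ, c₁, c₂ > 0 such that c₁|t−t₀|^{(m−1)/m} ≤ |F'(λ_k(t))| ≤ c₂|t−t₀|^{(m−1)/m} for all t ∈ I with 0 < |t−t₀| ≤ δ. -/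
open MeasureTheory Set
open scoped Real Classical

noncomputable section

/-- Factorial times power series coefficient equals iterated derivative. -/
private lemma coeff_factorial {f : ℂ → ℂ} {p : FormalMultilinearSeries ℂ ℂ ℂ} {z₀ : ℂ}
    (hp : HasFPowerSeriesAt f p z₀) (j : ℕ) :
    (j.factorial : ℂ) * p.coeff j = iteratedDeriv j f z₀ := by
  obtain ⟨r, hr⟩ := hp
  have h := hr.factorial_smul (1 : ℂ) j
  rw [iteratedDeriv_eq_iteratedFDeriv, ← h, nsmul_eq_mul]
  rfl

/-- Two-sided local bound `c₁‖z-z₀‖ⁿ ≤ ‖f z‖ ≤ c₂‖z-z₀‖ⁿ` for an analytic function whose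
first `n-1` derivatives vanish at `z₀` and whose `n`-th derivative does not. -/
private lemma locBound {f : ℂ → ℂ} {z₀ : ℂ} (hf : AnalyticAt ℂ f z₀) (n : ℕ)
    (hj : ∀ j < n, iteratedDeriv j f z₀ = 0) (hd : iteratedDeriv n f z₀ ≠ 0) :
    ∃ r c₁ c₂ : ℝ, 0 < r ∧ 0 < c₁ ∧ 0 < c₂ ∧ ∀ z : ℂ, ‖z - z₀‖ ≤ r →
      c₁ * ‖z - z₀‖ ^ n ≤ ‖f z‖ ∧ ‖f z‖ ≤ c₂ * ‖z - z₀‖ ^ n := by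
  classical
  obtain ⟨p, hp⟩ := hf
  have hcoeff : ∀ j, (j.factorial : ℂ) * p.coeff j = iteratedDeriv j f z₀ := coeff_factorial hp
  have hpn : p n ≠ 0 := by
    intro h
    apply hd
    rw [← hcoeff n, FormalMultilinearSeries.coeff_eq_zero.mpr h, mul_zero]
  have h0 : ∀ j < n, p j = 0 := by
    intro j hjn
    have h := hcoeff j
    rw [hj j hjn] at h
    have : p.coeff j = 0 := by
      rcases mul_eq_zero.mp h with h' | h'
      · exact absurd h' (by exact_mod_cast Nat.factorial_ne_zero j)
      · exact h'
    exact FormalMultilinearSeries.coeff_eq_zero.mp this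
  have hpne : p ≠ 0 := fun h => hpn (by simp [h])
  have horder : p.order = n := by
    rw [p.order_eq_find' hpne, Nat.find_eq_iff]
    exact ⟨hpn, fun k hk => not_not_intro (h0 k hk)⟩
  have hgz : (Function.swap dslope z₀)^[n] f z₀ ≠ 0 := by
    have h := hp.iterate_dslope_fslope_ne_zero hpne
    rwa [horder] at h
  set g := (Function.swap dslope z₀)^[n] f with hg
  have hgpos : 0 < ‖g z₀‖ := norm_pos_iff.mpr hgz
  have hgc : ContinuousAt g z₀ :=
    (hp.has_fpower_series_iterate_dslope_fslope n).analyticAt.continuousAt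
  have hev : ∀ᶠ z in nhds z₀, f z = (z - z₀) ^ n • g z := by
    have h := hp.eq_pow_order_mul_iterate_dslope
    rw [horder] at h
    exact Filter.Eventually.of_forall h
  have hgev : ∀ᶠ z in nhds z₀, ‖g z - g z₀‖ < ‖g z₀‖ / 2 := by
    have h1 : Filter.Tendsto g (nhds z₀) (nhds (g z₀)) := hgc
    have h2 := Metric.tendsto_nhds.mp h1 (‖g z₀‖ / 2) (half_pos hgpos)
    filter_upwards [h2] with z hz
    rwa [dist_eq_norm] at hz
  obtain ⟨ε, hε, hεP⟩ := Metric.eventually_nhds_iff.mp (hev.and hgev)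
  refine ⟨ε / 2, ‖g z₀‖ / 2, 2 * ‖g z₀‖, by positivity, half_pos hgpos,
    mul_pos two_pos hgpos, ?_⟩
  intro z hz
  have hdist : dist z z₀ < ε := by
    rw [dist_eq_norm]
    calc ‖z - z₀‖ ≤ ε / 2 := hz
    _ < ε := by linarith
  obtain ⟨h1, h2⟩ := hεP hdist
  have hfz : ‖f z‖ = ‖z - z₀‖ ^ n * ‖g z‖ := by
    rw [h1, smul_eq_mul, norm_mul, norm_pow]
  have hglo : ‖g z₀‖ / 2 ≤ ‖g z‖ := by
    have := norm_sub_norm_le (g z) (g z₀)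
    have h3 : ‖g z‖ - ‖g z₀‖ ≥ -(‖g z₀‖/2) := by
      have := abs_le.mp (le_of_lt (lt_of_le_of_lt (abs_norm_sub_norm_le (g z) (g z₀)) h2))
      linarith [this.1]
    linarith
  have hghi : ‖g z‖ ≤ 2 * ‖g z₀‖ := by
    have := norm_sub_norm_le (g z) (g z₀)
    have h3 : ‖g z‖ - ‖g z₀‖ ≤ ‖g z₀‖/2 := by
      have := abs_le.mp (le_of_lt (lt_of_le_of_lt (abs_norm_sub_norm_le (g z) (g z₀)) h2))
      linarith [this.2]
    linarith
  have hXnn : (0:ℝ) ≤ ‖z - z₀‖ ^ n := by positivity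
  constructor
  · rw [hfz, mul_comm]
    exact mul_le_mul_of_nonneg_left hglo hXnn
  · rw [hfz]
    calc ‖z - z₀‖ ^ n * ‖g z‖ ≤ ‖z - z₀‖ ^ n * (2 * ‖g z₀‖) :=
          mul_le_mul_of_nonneg_left hghi hXnn
    _ = 2 * ‖g z₀‖ * ‖z - z₀‖ ^ n := by ring

/-- From `u^m ≤ D*s` deduce `u^(m-1) ≤ D^((m-1)/m) * s^((m-1)/m)`. -/
private lemma rpowStep {u s D : ℝ} (hu : 0 ≤ u) (hs : 0 ≤ s) (hD : 0 ≤ D) {m : ℕ} (hm : 1 ≤ m)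
    (h : u ^ m ≤ D * s) :
    u ^ (m - 1) ≤ D ^ (((m:ℝ) - 1)/(m:ℝ)) * s ^ (((m:ℝ) - 1)/(m:ℝ)) := by
  have hm0 : (0:ℝ) < m := by exact_mod_cast hm
  have h1 : u ≤ (D * s) ^ (1/(m:ℝ)) := by
    have h2 := Real.rpow_le_rpow (by positivity) h (by positivity : (0:ℝ) ≤ 1/(m:ℝ))
    rwa [← Real.rpow_natCast u m, ← Real.rpow_mul hu, mul_one_div, div_self hm0.ne',
      Real.rpow_one] at h2
  have h3 : u ^ (m-1) ≤ ((D * s) ^ (1/(m:ℝ))) ^ (m-1) := pow_le_pow_left₀ hu h1 _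
  have h4 : ((D * s) ^ (1/(m:ℝ))) ^ (m-1) = (D * s) ^ (((m:ℝ) - 1)/(m:ℝ)) := by
    rw [← Real.rpow_natCast _ (m-1), ← Real.rpow_mul (by positivity)]
    congr 1
    rw [Nat.cast_sub hm, Nat.cast_one]
    field_simp
  rw [h4, Real.mul_rpow hD hs] at h3
  exact h3

/-- From `D*s ≤ u^m` deduce `D^((m-1)/m) * s^((m-1)/m) ≤ u^(m-1)`. -/
private lemma rpowStep' {u s D : ℝ} (hu : 0 ≤ u) (hs : 0 ≤ s) (hD : 0 ≤ D) {m : ℕ} (hm : 1 ≤ m)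
    (h : D * s ≤ u ^ m) :
    D ^ (((m:ℝ) - 1)/(m:ℝ)) * s ^ (((m:ℝ) - 1)/(m:ℝ)) ≤ u ^ (m - 1) := by
  have hm0 : (0:ℝ) < m := by exact_mod_cast hm
  have h1 : (D * s) ^ (1/(m:ℝ)) ≤ u := by
    have h2 := Real.rpow_le_rpow (by positivity) h (by positivity : (0:ℝ) ≤ 1/(m:ℝ))
    rwa [← Real.rpow_natCast u m, ← Real.rpow_mul hu, mul_one_div, div_self hm0.ne',
      Real.rpow_one] at h2
  have h3 : ((D * s) ^ (1/(m:ℝ))) ^ (m-1) ≤ u ^ (m-1) :=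
    pow_le_pow_left₀ (Real.rpow_nonneg (by positivity) _) h1 _
  have h4 : ((D * s) ^ (1/(m:ℝ))) ^ (m-1) = (D * s) ^ (((m:ℝ) - 1)/(m:ℝ)) := by
    rw [← Real.rpow_natCast _ (m-1), ← Real.rpow_mul (by positivity)]
    congr 1
    rw [Nat.cast_sub hm, Nat.cast_one]
    field_simp
  rwa [h4, Real.mul_rpow hD hs] at h3

/-- (Formula (62).)  Let `t₀ ∈ (0,π)`, `m ≥ 2` and `λ₀ ∈ ℂ` with `F(λ₀) = 2 cos t₀`,
`F⁽ʲ⁾(λ₀) = 0` for `1 ≤ j ≤ m-1` and `F⁽ᵐ⁾(λ₀) ≠ 0`.  If `λ_k` is a continuous branch on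
an open interval `(a,b) ∋ t₀` with `λ_k(t₀) = λ₀` and `F(λ_k(t)) = 2 cos t`, then
`F'(λ_k(t)) ∼ (t - t₀)^{(m-1)/m}` as `t → t₀`. -/
theorem derivF_branch_asymptotics (H : HillContext)
    (t₀ : ℝ) (ht₀ : t₀ ∈ Ioo 0 π) (m : ℕ) (hm : 2 ≤ m) (lam₀ : ℂ)
    (hF0 : H.F lam₀ = 2 * (Real.cos t₀ : ℂ))
    (hFj : ∀ j : ℕ, 1 ≤ j → j ≤ m - 1 → iteratedDeriv j H.F lam₀ = 0)
    (hFm : iteratedDeriv m H.F lam₀ ≠ 0)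
    (a b : ℝ) (ha : a < t₀) (hb : t₀ < b)
    (lamk : ℝ → ℂ) (hcont : ContinuousOn lamk (Ioo a b))
    (hk0 : lamk t₀ = lam₀)
    (hFk : ∀ t ∈ Ioo a b, H.F (lamk t) = 2 * (Real.cos t : ℂ)) :
    ∃ δ c₁ c₂ : ℝ, 0 < δ ∧ 0 < c₁ ∧ 0 < c₂ ∧
      ∀ t ∈ Ioo a b, 0 < |t - t₀| → |t - t₀| ≤ δ →
        c₁ * |t - t₀| ^ (((m : ℝ) - 1) / (m : ℝ)) ≤ ‖deriv H.F (lamk t)‖ ∧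
        ‖deriv H.F (lamk t)‖ ≤ c₂ * |t - t₀| ^ (((m : ℝ) - 1) / (m : ℝ)) := by
  classical
  -- F is entire
  have hFdiff : Differentiable ℂ H.F := (H.θ_entire 1).add (H.φd_entire 1)
  -- bounds for f₁ = F - F(λ₀), of order m at λ₀
  set f₁ : ℂ → ℂ := fun z => H.F z - H.F lam₀ with hf₁
  have hsub : ∀ j, 1 ≤ j → iteratedDeriv j f₁ = iteratedDeriv j H.F := by
    intro j hj
    obtain ⟨k, rfl⟩ : ∃ k, j = k + 1 := ⟨j - 1, by omega⟩
    rw [iteratedDeriv_succ', iteratedDeriv_succ']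
    have hdd : deriv f₁ = deriv H.F := by
      funext z
      rw [hf₁]
      exact deriv_sub_const (H.F lam₀)
    rw [hdd]
  have hj₁ : ∀ j < m, iteratedDeriv j f₁ lam₀ = 0 := by
    intro j hjm
    rcases Nat.eq_zero_or_pos j with h0 | hpos
    · subst h0
      rw [iteratedDeriv_zero]
      exact sub_self _
    · rw [hsub j hpos]; exact hFj j hpos (by omega)
  have hd₁ : iteratedDeriv m f₁ lam₀ ≠ 0 := by
    rw [hsub m (by omega)]; exact hFm
  obtain ⟨r₁, A₁, A₂, hr₁, hA₁, hA₂, hB1⟩ :=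
    locBound ((hFdiff.sub_const _).analyticAt lam₀) m hj₁ hd₁
  -- bounds for f₂ = F', of order m - 1 at λ₀
  have hFan : AnalyticOnNhd ℂ H.F Set.univ := fun z _ => hFdiff.analyticAt z
  have hd2eq : ∀ j : ℕ, iteratedDeriv j (deriv H.F) = iteratedDeriv (j + 1) H.F :=
    fun j => iteratedDeriv_succ'.symm
  have hj₂ : ∀ j < m - 1, iteratedDeriv j (deriv H.F) lam₀ = 0 := by
    intro j hjm
    rw [hd2eq]
    exact hFj (j + 1) (by omega) (by omega)
  have hd₂ : iteratedDeriv (m - 1) (deriv H.F) lam₀ ≠ 0 := by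
    rw [hd2eq]
    have h : m - 1 + 1 = m := by omega
    rw [h]
    exact hFm
  obtain ⟨r₂, B₁, B₂, hr₂, hB₁, hB₂, hB2⟩ :=
    locBound (hFan.deriv lam₀ (Set.mem_univ _)) (m - 1) hj₂ hd₂
  -- bounds for fc = 2cos - 2cos t₀, of order 1 at t₀
  set fc : ℂ → ℂ := fun z => 2 * Complex.cos z - 2 * (Real.cos t₀ : ℂ) with hfc
  have hfcd : Differentiable ℂ fc := (Complex.differentiable_cos.const_mul 2).sub_const _
  have hsinpos : 0 < Real.sin t₀ := Real.sin_pos_of_pos_of_lt_pi ht₀.1 ht₀.2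
  have hder : HasDerivAt fc (2 * -Complex.sin (t₀ : ℂ)) (t₀ : ℂ) :=
    ((Complex.hasDerivAt_cos (t₀ : ℂ)).const_mul 2).sub_const _
  have hjc : ∀ j < 1, iteratedDeriv j fc (t₀ : ℂ) = 0 := by
    intro j hj
    interval_cases j
    rw [iteratedDeriv_zero, hfc]
    simp only
    rw [Complex.ofReal_cos]
    exact sub_self _
  have hdc : iteratedDeriv 1 fc (t₀ : ℂ) ≠ 0 := by
    rw [iteratedDeriv_one, hder.deriv]
    simp only [ne_eq, mul_eq_zero, neg_eq_zero, not_or]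
    refine ⟨two_ne_zero, ?_⟩
    rw [← Complex.ofReal_sin]
    exact_mod_cast hsinpos.ne'
  obtain ⟨r₃, C₁, C₂, hr₃, hC₁, hC₂, hB3⟩ := locBound (hfcd.analyticAt _) 1 hjc hdc
  -- continuity of the branch
  have hca : ContinuousAt lamk t₀ := hcont.continuousAt (Ioo_mem_nhds ha hb)
  obtain ⟨δ₀, hδ₀, hδc⟩ := Metric.continuousAt_iff.mp hca (min r₁ r₂) (lt_min hr₁ hr₂)
  -- the value identity: fc t = F (λ(t)) - F(λ₀)
  have hval : ∀ t ∈ Ioo a b, fc (t : ℂ) = f₁ (lamk t) := by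
    intro t ht
    rw [hf₁]
    simp only
    rw [hFk t ht, hF0, hfc]
    simp only
    rw [Complex.ofReal_cos, Complex.ofReal_cos]
  have hnorm : ∀ t : ℝ, ‖(t : ℂ) - (t₀ : ℂ)‖ = |t - t₀| := by
    intro t
    rw [← Complex.ofReal_sub, Complex.norm_real, Real.norm_eq_abs]
  set e : ℝ := ((m : ℝ) - 1) / (m : ℝ) with he
  refine ⟨min (δ₀ / 2) r₃, B₁ * (C₁ / A₂) ^ e, B₂ * (C₂ / A₁) ^ e,
    lt_min (half_pos hδ₀) hr₃,
    mul_pos hB₁ (Real.rpow_pos_of_pos (div_pos hC₁ hA₂) _),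
    mul_pos hB₂ (Real.rpow_pos_of_pos (div_pos hC₂ hA₁) _), ?_⟩
  intro t ht htpos htδ
  set s := |t - t₀| with hs
  have hs0 : 0 ≤ s := abs_nonneg _
  have hdist : dist t t₀ < δ₀ := by
    rw [Real.dist_eq]
    calc |t - t₀| ≤ min (δ₀ / 2) r₃ := htδ
    _ ≤ δ₀ / 2 := min_le_left _ _
    _ < δ₀ := by linarith
  have hu : ‖lamk t - lam₀‖ < min r₁ r₂ := by
    have h := hδc hdist
    rwa [hk0, dist_eq_norm] at h
  set u := ‖lamk t - lam₀‖ with huu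
  have hu0 : 0 ≤ u := norm_nonneg _
  -- bounds from f₁
  obtain ⟨hL1, hU1⟩ := hB1 (lamk t) (le_trans hu.le (min_le_left _ _))
  -- bounds from f₂
  obtain ⟨hL2, hU2⟩ := hB2 (lamk t) (le_trans hu.le (min_le_right _ _))
  -- bounds from fc
  have htr₃ : ‖(t : ℂ) - (t₀ : ℂ)‖ ≤ r₃ := by
    rw [hnorm]
    exact le_trans htδ (min_le_right _ _)
  obtain ⟨hL3, hU3⟩ := hB3 (t : ℂ) htr₃
  rw [hnorm, pow_one] at hL3 hU3
  rw [hval t ht] at hL3 hU3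
  -- combine: A₁ u^m ≤ C₂ s  and  C₁ s ≤ A₂ u^m
  have key1 : u ^ m ≤ (C₂ / A₁) * s := by
    rw [div_mul_eq_mul_div, le_div_iff₀ hA₁]
    nlinarith [le_trans hL1 hU3]
  have key2 : (C₁ / A₂) * s ≤ u ^ m := by
    rw [div_mul_eq_mul_div, div_le_iff₀ hA₂]
    nlinarith [le_trans hL3 hU1]
  have hstep1 := rpowStep hu0 hs0 (le_of_lt (div_pos hC₂ hA₁)) (by omega : 1 ≤ m) key1
  have hstep2 := rpowStep' hu0 hs0 (le_of_lt (div_pos hC₁ hA₂)) (by omega : 1 ≤ m) key2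
  constructor
  · calc B₁ * (C₁ / A₂) ^ e * s ^ e = B₁ * ((C₁ / A₂) ^ e * s ^ e) := by ring
    _ ≤ B₁ * u ^ (m - 1) := mul_le_mul_of_nonneg_left hstep2 hB₁.le
    _ ≤ ‖deriv H.F (lamk t)‖ := hL2
  · calc ‖deriv H.F (lamk t)‖ ≤ B₂ * u ^ (m - 1) := hU2
    _ ≤ B₂ * ((C₂ / A₁) ^ e * s ^ e) := mul_le_mul_of_nonneg_left hstep1 hB₂.le
    _ = B₂ * (C₂ / A₁) ^ e * s ^ e := by ring

end
end

section
/- (Proposition 4) Let m ≥ 2 and let λ₀ ∈ ℂ be an eigenvalue of L₀ of multiplicity m, i.e. F(λ₀) = 2, F^{(j)}(λ₀) = 0 for 1 ≤ j ≤ m−1, F^{(m)}(λ₀) ≠ 0, and suppose its geometric multiplicity is 1 with φ(1,λ₀) ≠ 0 (the case θ'(1,λ₀) ≠ 0 being symmetric, using G in place of Φ). Let λ_n : (−δ₀,δ₀) → ℂ be continuous with λ_n(0) = λ₀ and F(λ_n(t)) = 2cos t. Then |α_n(t)| ∼ |t|^{2(m−1)/m} as t → 0; since 2(m−1)/m ≥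 1, the function 1/|α_n| is not Lebesgue integrable on any punctured neighborhood of 0, i.e. λ₀ is an essential spectral singularity of L. The same holds with L₀ replaced by L_π (F(λ₀) = −2 and branches through t₀ = π). -/
open MeasureTheory Set
open scoped Real Classical

noncomputable section

namespace HillESS



lemma mul_primitive_integral {f g : ℝ → ℂ}
    (hf : IntegrableOn f (Ioc (0:ℝ) 1)) (hg : IntegrableOn g (Ioc (0:ℝ) 1)) :
    (∫ x in Ioc (0:ℝ) 1, (∫ s in Ioc (0:ℝ) x, f s) * g x)
      + (∫ x in Ioc (0:ℝ) 1, f x * (∫ s in Ioc (0:ℝ) x, g s))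
      = (∫ s in Ioc (0:ℝ) 1, f s) * (∫ s in Ioc (0:ℝ) 1, g s) := by
  set μ1 : Measure ℝ := volume.restrict (Ioc (0:ℝ) 1) with hμ1
  have hfμ : Integrable f μ1 := hf
  have hgμ : Integrable g μ1 := hg
  have hfg : Integrable (fun p : ℝ × ℝ => f p.1 * g p.2) (μ1.prod μ1) := hfμ.mul_prod hgμ
  have hD : MeasurableSet {p : ℝ × ℝ | p.1 ≤ p.2} :=
    measurableSet_le measurable_fst measurable_snd
  have hD2 : MeasurableSet {p : ℝ × ℝ | p.2 ≤ p.1} :=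
    measurableSet_le measurable_snd measurable_fst
  have hDiag : MeasurableSet {p : ℝ × ℝ | p.1 = p.2} :=
    measurableSet_eq_fun measurable_fst measurable_snd
  set K : ℝ × ℝ → ℂ := ({p : ℝ × ℝ | p.1 ≤ p.2}).indicator (fun p => f p.1 * g p.2) with hK_def
  set K2 : ℝ × ℝ → ℂ := ({p : ℝ × ℝ | p.2 ≤ p.1}).indicator (fun p => f p.1 * g p.2) with hK2_def
  have hK : Integrable K (μ1.prod μ1) := hfg.indicator hD
  have hK2 : Integrable K2 (μ1.prod μ1) := hfg.indicator hD2
  have hIic : ∀ x ∈ Ioc (0:ℝ) 1, Iic x ∩ Ioc (0:ℝ) 1 = Ioc (0:ℝ) x := by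
    intro x hx
    ext y
    simp only [mem_inter_iff, mem_Iic, mem_Ioc]
    exact ⟨fun ⟨h1, h2, _⟩ => ⟨h2, h1⟩, fun ⟨h1, h2⟩ => ⟨h2, h1, h2.trans hx.2⟩⟩
  have inner1 : ∀ x ∈ Ioc (0:ℝ) 1, (∫ s, K (s, x) ∂μ1) = (∫ s in Ioc (0:ℝ) x, f s) * g x := by
    intro x hx
    have h1 : (fun s => K (s, x)) = (Iic x).indicator (fun s => f s * g x) := by
      funext s
      by_cases h : s ≤ x <;> simp [hK_def, Set.indicator_apply, h]
    rw [h1, integral_indicator measurableSet_Iic, hμ1,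
      Measure.restrict_restrict measurableSet_Iic, hIic x hx, integral_mul_const]
  have inner2 : ∀ x ∈ Ioc (0:ℝ) 1, (∫ s, K2 (x, s) ∂μ1) = f x * (∫ s in Ioc (0:ℝ) x, g s) := by
    intro x hx
    have h1 : (fun s => K2 (x, s)) = (Iic x).indicator (fun s => f x * g s) := by
      funext s
      by_cases h : s ≤ x <;> simp [hK2_def, Set.indicator_apply, h]
    rw [h1, integral_indicator measurableSet_Iic, hμ1,
      Measure.restrict_restrict measurableSet_Iic, hIic x hx, integral_const_mul]
  have swap1 : (∫ p, K p ∂(μ1.prod μ1)) = ∫ x, (∫ s, K (s, x) ∂μ1) ∂μ1 := by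
    rw [MeasureTheory.integral_prod _ hK]
    exact MeasureTheory.integral_integral_swap (by exact hK)
  have hP1 : (∫ p, K p ∂(μ1.prod μ1))
      = ∫ x in Ioc (0:ℝ) 1, (∫ s in Ioc (0:ℝ) x, f s) * g x := by
    rw [swap1]
    exact setIntegral_congr_fun measurableSet_Ioc inner1
  have hP2 : (∫ p, K2 p ∂(μ1.prod μ1))
      = ∫ x in Ioc (0:ℝ) 1, f x * (∫ s in Ioc (0:ℝ) x, g s) := by
    rw [MeasureTheory.integral_prod _ hK2]
    exact setIntegral_congr_fun measurableSet_Ioc inner2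
  have hsum : (fun p => K p + K2 p)
      = fun p : ℝ × ℝ => f p.1 * g p.2
          + ({p : ℝ × ℝ | p.1 = p.2}).indicator (fun p => f p.1 * g p.2) p := by
    funext p
    by_cases h1 : p.1 ≤ p.2
    · by_cases h2 : p.2 ≤ p.1
      · have h3 : p.1 = p.2 := le_antisymm h1 h2
        simp [hK_def, hK2_def, Set.indicator_apply, h1, h2, h3]
      · have h3 : ¬ p.1 = p.2 := fun h => h2 (le_of_eq h.symm)
        simp [hK_def, hK2_def, Set.indicator_apply, h1, h2, h3]
    · have h2 : p.2 ≤ p.1 := le_of_not_ge h1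
      have h3 : ¬ p.1 = p.2 := fun h => h1 (le_of_eq h)
      simp [hK_def, hK2_def, Set.indicator_apply, h1, h2, h3]
  have hdiag : (μ1.prod μ1) {p : ℝ × ℝ | p.1 = p.2} = 0 := by
    rw [Measure.prod_apply hDiag]
    have h0 : ∀ s : ℝ, μ1 (Prod.mk s ⁻¹' {p : ℝ × ℝ | p.1 = p.2}) = 0 := by
      intro s
      have hpre : (Prod.mk s ⁻¹' {p : ℝ × ℝ | p.1 = p.2}) = {s} := by
        ext y; simp [eq_comm]
      rw [hpre, hμ1, Measure.restrict_apply (measurableSet_singleton s)]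
      exact measure_mono_null inter_subset_left Real.volume_singleton
    simp [h0]
  have hdiag_int : (∫ p, ({p : ℝ × ℝ | p.1 = p.2}).indicator
      (fun p => f p.1 * g p.2) p ∂(μ1.prod μ1)) = 0 := by
    have hae : ∀ᵐ p ∂(μ1.prod μ1),
        ({p : ℝ × ℝ | p.1 = p.2}).indicator (fun p => f p.1 * g p.2) p = 0 := by
      filter_upwards [measure_eq_zero_iff_ae_notMem.mp hdiag] with p hp
      simp [Set.indicator_apply, hp]
    exact integral_eq_zero_of_ae hae
  have e1 : (∫ x in Ioc (0:ℝ) 1, (∫ s in Ioc (0:ℝ) x, f s) * g x)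
      + (∫ x in Ioc (0:ℝ) 1, f x * (∫ s in Ioc (0:ℝ) x, g s))
      = (∫ p, K p ∂(μ1.prod μ1)) + (∫ p, K2 p ∂(μ1.prod μ1)) := by
    rw [hP1, hP2]
  rw [e1, ← integral_add hK hK2]
  rw [show (fun a => K a + K2 a)
      = fun p : ℝ × ℝ => f p.1 * g p.2
          + ({p : ℝ × ℝ | p.1 = p.2}).indicator (fun p => f p.1 * g p.2) p from hsum]
  rw [integral_add hfg (hfg.indicator hDiag), hdiag_int, add_zero,
    MeasureTheory.integral_prod_mul]

lemma primitive_mul_integral {f g u v : ℝ → ℂ}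
    (hf : IntervalIntegrable f volume 0 1) (hg : IntervalIntegrable g volume 0 1)
    (hu : ∀ x ∈ Icc (0:ℝ) 1, u x = u 0 + ∫ s in (0:ℝ)..x, f s)
    (hv : ∀ x ∈ Icc (0:ℝ) 1, v x = v 0 + ∫ s in (0:ℝ)..x, g s) :
    ∫ x in (0:ℝ)..1, (u x * g x + f x * v x) = u 1 * v 1 - u 0 * v 0 := by
  have h01 : (0:ℝ) ≤ 1 := zero_le_one
  have hfIoc : IntegrableOn f (Ioc (0:ℝ) 1) :=
    (intervalIntegrable_iff_integrableOn_Ioc_of_le h01).mp hf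
  have hgIoc : IntegrableOn g (Ioc (0:ℝ) 1) :=
    (intervalIntegrable_iff_integrableOn_Ioc_of_le h01).mp hg
  have hfIcc : IntegrableOn f (uIcc (0:ℝ) 1) := by
    rw [uIcc_of_le h01]; exact hfIoc.congr_set_ae Ioc_ae_eq_Icc.symm
  have hgIcc : IntegrableOn g (uIcc (0:ℝ) 1) := by
    rw [uIcc_of_le h01]; exact hgIoc.congr_set_ae Ioc_ae_eq_Icc.symm
  have hPu : ContinuousOn (fun x => ∫ s in (0:ℝ)..x, f s) (uIcc (0:ℝ) 1) :=
    intervalIntegral.continuousOn_primitive_interval hfIcc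
  have hPv : ContinuousOn (fun x => ∫ s in (0:ℝ)..x, g s) (uIcc (0:ℝ) 1) :=
    intervalIntegral.continuousOn_primitive_interval hgIcc
  have i1 : IntervalIntegrable (fun x => u 0 * g x) volume 0 1 := hg.const_mul _
  have i2 : IntervalIntegrable (fun x => (∫ s in (0:ℝ)..x, f s) * g x) volume 0 1 :=
    hg.continuousOn_mul hPu
  have i3 : IntervalIntegrable (fun x => f x * v 0) volume 0 1 := hf.mul_const _
  have i4 : IntervalIntegrable (fun x => f x * (∫ s in (0:ℝ)..x, g s)) volume 0 1 :=
    hf.mul_continuousOn hPv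
  have congr1 : (∫ x in (0:ℝ)..1, (u x * g x + f x * v x))
      = ∫ x in (0:ℝ)..1, ((u 0 * g x + (∫ s in (0:ℝ)..x, f s) * g x)
          + (f x * v 0 + f x * (∫ s in (0:ℝ)..x, g s))) := by
    apply intervalIntegral.integral_congr
    intro x hx
    rw [uIcc_of_le h01] at hx
    dsimp only
    rw [hu x hx, hv x hx]; ring
  rw [congr1, intervalIntegral.integral_add (i1.add i2) (i3.add i4),
    intervalIntegral.integral_add i1 i2, intervalIntegral.integral_add i3 i4,
    intervalIntegral.integral_const_mul, intervalIntegral.integral_mul_const]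
  have k1 : (∫ x in (0:ℝ)..1, (∫ s in (0:ℝ)..x, f s) * g x)
      = ∫ x in Ioc (0:ℝ) 1, (∫ s in Ioc (0:ℝ) x, f s) * g x := by
    rw [intervalIntegral.integral_of_le h01]
    refine setIntegral_congr_fun measurableSet_Ioc (fun x hx => ?_)
    rw [intervalIntegral.integral_of_le hx.1.le]
  have k2 : (∫ x in (0:ℝ)..1, f x * (∫ s in (0:ℝ)..x, g s))
      = ∫ x in Ioc (0:ℝ) 1, f x * (∫ s in Ioc (0:ℝ) x, g s) := by
    rw [intervalIntegral.integral_of_le h01]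
    refine setIntegral_congr_fun measurableSet_Ioc (fun x hx => ?_)
    rw [intervalIntegral.integral_of_le hx.1.le]
  have core : (∫ x in (0:ℝ)..1, (∫ s in (0:ℝ)..x, f s) * g x)
      + (∫ x in (0:ℝ)..1, f x * (∫ s in (0:ℝ)..x, g s))
      = (∫ s in (0:ℝ)..1, f s) * (∫ s in (0:ℝ)..1, g s) := by
    rw [k1, k2, intervalIntegral.integral_of_le h01, intervalIntegral.integral_of_le h01]
    exact mul_primitive_integral hfIoc hgIoc
  have hu1 := hu 1 (by norm_num)
  have hv1 := hv 1 (by norm_num)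
  rw [hu1, hv1]
  linear_combination core

lemma lagrange_identity {q : ℝ → ℂ} {lam mu : ℂ} {y yd z zd : ℝ → ℂ}
    (hy : IsHillSolution q lam y yd) (hz : IsHillSolution q mu z zd) :
    (lam - mu) * ∫ x in (0:ℝ)..1, y x * z x
      = (y 1 * zd 1 - y 0 * zd 0) - (z 1 * yd 1 - z 0 * yd 0) := by
  have h01 : (0:ℝ) ≤ 1 := zero_le_one
  have contOf : ∀ (w wd : ℝ → ℂ), IntervalIntegrable wd volume 0 1 →
      (∀ x ∈ Icc (0:ℝ) 1, w x = w 0 + ∫ s in (0:ℝ)..x, wd s) →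
      ContinuousOn w (uIcc (0:ℝ) 1) := by
    intro w wd hint heq
    have hIcc : IntegrableOn wd (uIcc (0:ℝ) 1) := by
      rw [uIcc_of_le h01]
      exact ((intervalIntegrable_iff_integrableOn_Ioc_of_le h01).mp hint).congr_set_ae
        Ioc_ae_eq_Icc.symm
    have hC := (continuousOn_const (c := w 0)).add (intervalIntegral.continuousOn_primitive_interval hIcc)
    refine hC.congr ?_
    intro x hx
    rw [uIcc_of_le h01] at hx
    exact heq x hx
  have hyC : ContinuousOn y (uIcc (0:ℝ) 1) := contOf y yd hy.int_yd hy.y_eq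
  have hzC : ContinuousOn z (uIcc (0:ℝ) 1) := contOf z zd hz.int_yd hz.y_eq
  have hydC : ContinuousOn yd (uIcc (0:ℝ) 1) := contOf yd _ hy.int_rhs hy.yd_eq
  have hzdC : ContinuousOn zd (uIcc (0:ℝ) 1) := contOf zd _ hz.int_rhs hz.yd_eq
  have A := primitive_mul_integral hy.int_yd hz.int_rhs hy.y_eq hz.yd_eq
  have B := primitive_mul_integral hz.int_yd hy.int_rhs hz.y_eq hy.yd_eq
  have iA : IntervalIntegrable
      (fun x => y x * (q x * z x - mu * z x) + yd x * zd x) volume 0 1 :=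
    (hz.int_rhs.continuousOn_mul hyC).add (hy.int_yd.mul_continuousOn hzdC)
  have iB : IntervalIntegrable
      (fun x => z x * (q x * y x - lam * y x) + zd x * yd x) volume 0 1 :=
    (hy.int_rhs.continuousOn_mul hzC).add (hz.int_yd.mul_continuousOn hydC)
  have hsub := intervalIntegral.integral_sub iA iB
  have hpt : (∫ x in (0:ℝ)..1,
      ((y x * (q x * z x - mu * z x) + yd x * zd x)
        - (z x * (q x * y x - lam * y x) + zd x * yd x)))
      = ∫ x in (0:ℝ)..1, (lam - mu) * (y x * z x) := by
    apply intervalIntegral.integral_congr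
    intro x _
    ring
  calc (lam - mu) * ∫ x in (0:ℝ)..1, y x * z x
      = ∫ x in (0:ℝ)..1, (lam - mu) * (y x * z x) :=
        (intervalIntegral.integral_const_mul _ _).symm
    _ = ∫ x in (0:ℝ)..1,
        ((y x * (q x * z x - mu * z x) + yd x * zd x)
          - (z x * (q x * y x - lam * y x) + zd x * yd x)) := hpt.symm
    _ = (y 1 * zd 1 - y 0 * zd 0) - (z 1 * yd 1 - z 0 * yd 0) := by
        rw [hsub, A, B]

/-- Continuity in a parameter of an interval integral of a jointly continuous function. -/
lemma continuousAt_parametric_integral {X : Type*} [PseudoMetricSpace X] [ProperSpace X]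
    {E : Type*} [NormedAddCommGroup E] [NormedSpace ℝ E] {F : X → ℝ → E} {x₀ : X} {r : ℝ}
    (hr : 0 < r)
    (hF : ContinuousOn (fun p : X × ℝ => F p.1 p.2) ((Metric.closedBall x₀ r) ×ˢ Icc 0 1)) :
    ContinuousAt (fun x => ∫ t in (0:ℝ)..1, F x t) x₀ := by
  have hsub : Set.uIoc (0:ℝ) 1 ⊆ Icc (0:ℝ) 1 := by
    rw [uIoc_of_le zero_le_one]; exact Ioc_subset_Icc_self
  obtain ⟨C, hC⟩ :=
    (((isCompact_closedBall x₀ r).prod isCompact_Icc).exists_bound_of_continuousOn hF)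
  apply intervalIntegral.continuousAt_of_dominated_interval (bound := fun _ => C)
  · filter_upwards [Metric.closedBall_mem_nhds x₀ hr] with x hx
    have hcont : ContinuousOn (fun t => F x t) (Icc (0:ℝ) 1) := by
      have : (fun t => F x t) = (fun p : X × ℝ => F p.1 p.2) ∘ (fun t => (x, t)) := rfl
      rw [this]
      exact hF.comp ((continuous_const.prodMk continuous_id).continuousOn)
        (fun t ht => ⟨hx, ht⟩)
    exact (hcont.mono hsub).aestronglyMeasurable measurableSet_uIoc
  · filter_upwards [Metric.closedBall_mem_nhds x₀ hr] with x hx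
    exact Filter.Eventually.of_forall (fun t ht => hC (x, t) ⟨hx, hsub ht⟩)
  · exact intervalIntegrable_const
  · refine Filter.Eventually.of_forall (fun t ht => ?_)
    have h1 : ContinuousWithinAt (fun x => F x t) (Metric.closedBall x₀ r) x₀ := by
      have : (fun x => F x t) = (fun p : X × ℝ => F p.1 p.2) ∘ (fun x => (x, t)) := rfl
      rw [this]
      exact (hF.comp ((continuous_id.prodMk continuous_const).continuousOn)
        (fun x hx => ⟨hx, hsub ht⟩)) x₀ (Metric.mem_closedBall_self hr.le)
    exact h1.continuousAt (Metric.closedBall_mem_nhds x₀ hr)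

/-- If `f z = (z - z₀)^k h z` with `h` entire, then the `k`-th derivative of `f` at `z₀`
is `k! * h z₀`. -/
lemma iteratedDeriv_factor (z₀ : ℂ) :
    ∀ (k : ℕ) (f h : ℂ → ℂ), Differentiable ℂ h →
      (∀ z, f z = (z - z₀) ^ k * h z) →
      iteratedDeriv k f z₀ = (k.factorial : ℂ) * h z₀ := by
  intro k
  induction k with
  | zero =>
    intro f h hh hfh
    simp [iteratedDeriv_zero, hfh z₀]
  | succ k ih =>
    intro f h hh hfh
    have hdh : Differentiable ℂ (deriv h) := by
      intro z
      have : AnalyticOnNhd ℂ h univ := fun w _ => hh.analyticAt w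
      exact ((this.deriv) z (mem_univ z)).differentiableAt
    have hd : ∀ z, deriv f z
        = (z - z₀) ^ k * (((k : ℂ) + 1) * h z + (z - z₀) * deriv h z) := by
      intro z
      have hp : HasDerivAt (fun z => (z - z₀) ^ (k + 1))
          (((k : ℂ) + 1) * (z - z₀) ^ k) z := by
        have h1 : HasDerivAt (fun z : ℂ => z - z₀) 1 z := (hasDerivAt_id z).sub_const z₀
        have h2 := (hasDerivAt_pow (k + 1) (z - z₀)).comp z h1
        simp at h2; exact h2
      have H1 : HasDerivAt f
          (((k : ℂ) + 1) * (z - z₀) ^ k * h z + (z - z₀) ^ (k + 1) * deriv h z) z := by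
        have := hp.mul ((hh z).hasDerivAt)
        have hfeq : f = fun z => (z - z₀) ^ (k + 1) * h z := funext hfh
        rw [hfeq]
        exact this
      rw [H1.deriv]; ring
    rw [iteratedDeriv_succ']
    have happ := ih (deriv f) (fun z => ((k : ℂ) + 1) * h z + (z - z₀) * deriv h z)
      ((differentiable_const _ |>.mul hh).add ((differentiable_id.sub_const _).mul hdh))
      hd
    rw [happ]
    simp only [sub_self, zero_mul, add_zero, Nat.factorial_succ]
    push_cast
    ring

/-- Entire functions with vanishing derivatives up to order `m - 1` factor as
`(z - z₀)^m g z` with `g` entire and `m! g z₀` the `m`-th derivative. -/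
lemma factor_of_derivs (f : ℂ → ℂ) (hf : Differentiable ℂ f) (z₀ : ℂ) (m : ℕ)
    (h0 : ∀ j < m, iteratedDeriv j f z₀ = 0) :
    ∃ g : ℂ → ℂ, Differentiable ℂ g ∧ (∀ z, f z = (z - z₀) ^ m * g z) ∧
      (m.factorial : ℂ) * g z₀ = iteratedDeriv m f z₀ := by
  induction m with
  | zero =>
    exact ⟨f, hf, fun z => by simp, by simp [iteratedDeriv_zero]⟩
  | succ m ih =>
    obtain ⟨g, hg, hfg, hval⟩ := ih (fun j hj => h0 j (hj.trans (Nat.lt_succ_self m)))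
    have hgz : g z₀ = 0 := by
      have h1 := h0 m (Nat.lt_succ_self m)
      rw [← hval] at h1
      have h2 : (m.factorial : ℂ) ≠ 0 := Nat.cast_ne_zero.mpr m.factorial_ne_zero
      exact (mul_eq_zero.mp h1).resolve_left h2
    have hds : Differentiable ℂ (dslope g z₀) := by
      intro w
      rcases eq_or_ne w z₀ with rfl | hne
      · obtain ⟨p, hp⟩ := hg.analyticAt w
        exact (hp.has_fpower_series_dslope_fslope).analyticAt.differentiableAt
      · exact (differentiableAt_dslope_of_ne hne).mpr (hg w)
    have hgds : ∀ z, g z = (z - z₀) * dslope g z₀ z := by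
      intro z
      have := sub_smul_dslope g z₀ z
      rw [hgz, sub_zero] at this
      simpa [smul_eq_mul] using this.symm
    have hfac : ∀ z, f z = (z - z₀) ^ (m + 1) * dslope g z₀ z := by
      intro z
      rw [hfg z, hgds z, pow_succ]
      ring
    refine ⟨dslope g z₀, hds, hfac, ?_⟩
    exact (iteratedDeriv_factor z₀ (m + 1) f (dslope g z₀) hds hfac).symm

/-- Two-sided bounds near `z₀` from a factorization `f = (z - z₀)^m g`, `g z₀ ≠ 0`. -/
lemma bounds_of_factor (f g : ℂ → ℂ) (z₀ : ℂ) (m : ℕ) (hg : Continuous g)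
    (hgz : g z₀ ≠ 0) (hfg : ∀ z, f z = (z - z₀) ^ m * g z) :
    ∃ r C₁ C₂ : ℝ, 0 < r ∧ 0 < C₁ ∧ 0 < C₂ ∧ ∀ z : ℂ, ‖z - z₀‖ ≤ r →
      C₁ * ‖z - z₀‖ ^ m ≤ ‖f z‖ ∧ ‖f z‖ ≤ C₂ * ‖z - z₀‖ ^ m := by
  have hpos : 0 < ‖g z₀‖ := norm_pos_iff.mpr hgz
  obtain ⟨δ, hδ, hball⟩ := Metric.continuousAt_iff.mp hg.continuousAt (‖g z₀‖ / 2) (by linarith)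
  refine ⟨δ / 2, ‖g z₀‖ / 2, 2 * ‖g z₀‖, by linarith, by linarith, by linarith, ?_⟩
  intro z hz
  have hdist : dist z z₀ < δ := by
    rw [dist_eq_norm]; linarith
  have hgb := hball hdist
  rw [dist_eq_norm] at hgb
  have hlow : ‖g z₀‖ / 2 ≤ ‖g z‖ := by
    have h1 : ‖g z₀‖ - ‖g z‖ ≤ ‖g z - g z₀‖ := by
      have := norm_sub_norm_le (g z₀) (g z)
      rwa [norm_sub_rev] at this
    linarith
  have hup : ‖g z‖ ≤ 2 * ‖g z₀‖ := by
    have h1 : ‖g z‖ - ‖g z₀‖ ≤ ‖g z - g z₀‖ := norm_sub_norm_le _ _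
    linarith
  have hfz : ‖f z‖ = ‖z - z₀‖ ^ m * ‖g z‖ := by
    rw [hfg z, norm_mul, norm_pow]
  constructor
  · rw [hfz, mul_comm (‖g z₀‖ / 2)]
    exact mul_le_mul_of_nonneg_left hlow (by positivity)
  · rw [hfz, mul_comm (2 * ‖g z₀‖)]
    exact mul_le_mul_of_nonneg_left hup (by positivity)

/-- `|2 cos t - 2 cos t₀| = 4 sin²((t-t₀)/2)` and two-sided quadratic bounds. -/
lemma cos_diff_bounds (t₀ t : ℝ) (ht₀ : t₀ = 0 ∨ t₀ = π) (h : |t - t₀| ≤ π) :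
    (4 / π ^ 2) * (t - t₀) ^ 2 ≤ |2 * Real.cos t - 2 * Real.cos t₀| ∧
      |2 * Real.cos t - 2 * Real.cos t₀| ≤ (t - t₀) ^ 2 := by
  have hπ : 0 < π := Real.pi_pos
  have key : |2 * Real.cos t - 2 * Real.cos t₀| = 4 * Real.sin ((t - t₀) / 2) ^ 2 := by
    rcases ht₀ with rfl | rfl
    · have h1 : Real.cos t = 2 * Real.cos (t / 2) ^ 2 - 1 := by
        have := Real.cos_two_mul (t / 2)
        rw [show 2 * (t / 2) = t by ring] at this
        linarith
      have h2 := Real.sin_sq_add_cos_sq (t / 2)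
      have h3 : 2 * Real.cos t - 2 * Real.cos 0 = -(4 * Real.sin ((t - 0) / 2) ^ 2) := by
        rw [Real.cos_zero, h1]
        rw [show (t - 0) / 2 = t / 2 by ring]
        nlinarith
      rw [h3, abs_neg, abs_of_nonneg (by positivity)]
    · have h1 : Real.cos t = 2 * Real.cos (t / 2) ^ 2 - 1 := by
        have := Real.cos_two_mul (t / 2)
        rw [show 2 * (t / 2) = t by ring] at this
        linarith
      have h2 : Real.cos (t / 2) = -Real.sin ((t - π) / 2) := by
        rw [show t / 2 = (t - π) / 2 + π / 2 by ring]
        exact Real.cos_add_pi_div_two _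
      have h3 : 2 * Real.cos t - 2 * Real.cos π = 4 * Real.sin ((t - π) / 2) ^ 2 := by
        rw [Real.cos_pi, h1, h2]
        ring
      rw [h3, abs_of_nonneg (by positivity)]
  rw [key]
  set s := (t - t₀) / 2 with hs
  have hs2 : |s| ≤ π / 2 := by
    rw [hs, abs_div, abs_of_pos (by norm_num : (0:ℝ) < 2)]
    linarith
  constructor
  · -- lower bound
    have hsin : 2 / π * |s| ≤ |Real.sin s| := Real.mul_abs_le_abs_sin hs2
    have hsq : (2 / π * |s|) ^ 2 ≤ Real.sin s ^ 2 := by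
      rw [← sq_abs (Real.sin s)]
      exact pow_le_pow_left₀ (by positivity) hsin 2
    have hid : (2 / π * |s|) ^ 2 = (4 / π ^ 2) * s ^ 2 := by
      rw [mul_pow, sq_abs, div_pow]
      norm_num
    have hsq' : 4 / π ^ 2 * s ^ 2 ≤ Real.sin s ^ 2 := by rw [← hid]; exact hsq
    have hts : (t - t₀) ^ 2 = 4 * s ^ 2 := by rw [hs]; ring
    have hgoal : 4 / π ^ 2 * (t - t₀) ^ 2 = 4 * (4 / π ^ 2 * s ^ 2) := by rw [hts]; ring
    rw [hgoal]
    linarith [hsq']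
  · -- upper bound
    have hsin : |Real.sin s| ≤ |s| := Real.abs_sin_le_abs
    have hsq : Real.sin s ^ 2 ≤ s ^ 2 := by
      rw [← sq_abs (Real.sin s), ← sq_abs s]
      exact pow_le_pow_left₀ (abs_nonneg _) hsin 2
    have hts : (t - t₀) ^ 2 = 4 * s ^ 2 := by rw [hs]; ring
    rw [hts]
    linarith [hsq]


end HillESS

namespace HillESS

open HillContext

lemma J_eq (H : HillContext) (lam : ℂ) :
    H.φ 1 lam * (∫ x in (0:ℝ)..1, H.θ x lam * H.θ x lam)
      + (H.φd 1 lam - H.θ 1 lam) * (∫ x in (0:ℝ)..1, H.θ x lam * H.φ x lam)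
      - H.θd 1 lam * (∫ x in (0:ℝ)..1, H.φ x lam * H.φ x lam)
    = - deriv H.F lam := by
  set al := H.θ 1 lam with hal
  set bl := H.θd 1 lam with hbl
  set cl := H.φ 1 lam with hcl
  set dl := H.φd 1 lam with hdl
  have ha : HasDerivAt (H.θ 1) (deriv (H.θ 1) lam) lam := (H.θ_entire 1 lam).hasDerivAt
  have hb : HasDerivAt (H.θd 1) (deriv (H.θd 1) lam) lam := (H.θd_entire 1 lam).hasDerivAt
  have hc : HasDerivAt (H.φ 1) (deriv (H.φ 1) lam) lam := (H.φ_entire 1 lam).hasDerivAt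
  have hd : HasDerivAt (H.φd 1) (deriv (H.φd 1) lam) lam := (H.φd_entire 1 lam).hasDerivAt
  set a' := deriv (H.θ 1) lam with ha'
  set b' := deriv (H.θd 1) lam with hb'
  set c' := deriv (H.φ 1) lam with hc'
  set d' := deriv (H.φd 1) lam with hd'
  -- Lagrange identities
  have L1 : ∀ μ : ℂ, (lam - μ) * (∫ x in (0:ℝ)..1, H.θ x lam * H.θ x μ)
      = al * H.θd 1 μ - H.θ 1 μ * bl := by
    intro μ
    have h := lagrange_identity (H.sol_θ lam) (H.sol_θ μ)
    simpa [H.θ_init, H.θd_init] using h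
  have L2 : ∀ μ : ℂ, (lam - μ) * (∫ x in (0:ℝ)..1, H.θ x lam * H.φ x μ)
      = al * H.φd 1 μ - 1 - H.φ 1 μ * bl := by
    intro μ
    have h := lagrange_identity (H.sol_θ lam) (H.sol_φ μ)
    simp only [H.θ_init, H.θd_init, H.φ_init, H.φd_init] at h
    linear_combination h
  have L3 : ∀ μ : ℂ, (lam - μ) * (∫ x in (0:ℝ)..1, H.φ x lam * H.θ x μ)
      = cl * H.θd 1 μ - H.θ 1 μ * dl + 1 := by
    intro μ
    have h := lagrange_identity (H.sol_φ lam) (H.sol_θ μ)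
    simp only [H.θ_init, H.θd_init, H.φ_init, H.φd_init] at h
    linear_combination h
  have L4 : ∀ μ : ℂ, (lam - μ) * (∫ x in (0:ℝ)..1, H.φ x lam * H.φ x μ)
      = cl * H.φd 1 μ - H.φ 1 μ * dl := by
    intro μ
    have h := lagrange_identity (H.sol_φ lam) (H.sol_φ μ)
    simp only [H.θ_init, H.θd_init, H.φ_init, H.φd_init] at h
    linear_combination h
  set Q : ℂ → ℂ := fun μ =>
    cl * (∫ x in (0:ℝ)..1, H.θ x lam * H.θ x μ)
      + (dl - al) / 2 * ((∫ x in (0:ℝ)..1, H.θ x lam * H.φ x μ)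
          + (∫ x in (0:ℝ)..1, H.φ x lam * H.θ x μ))
      - bl * (∫ x in (0:ℝ)..1, H.φ x lam * H.φ x μ) with hQ
  set Efun : ℂ → ℂ := fun μ =>
    cl * (al * H.θd 1 μ - H.θ 1 μ * bl)
      + (dl - al) / 2 * ((al * H.φd 1 μ - 1 - H.φ 1 μ * bl)
          + (cl * H.θd 1 μ - H.θ 1 μ * dl + 1))
      - bl * (cl * H.φd 1 μ - H.φ 1 μ * dl) with hEfun
  have hQE : ∀ μ : ℂ, (lam - μ) * Q μ = Efun μ := by
    intro μ
    simp only [hQ, hEfun]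
    linear_combination cl * L1 μ + (dl - al) / 2 * L2 μ + (dl - al) / 2 * L3 μ - bl * L4 μ
  have hE0 : Efun lam = 0 := by simp only [hEfun]; ring
  -- derivative of Efun
  set e : ℂ := cl * (al * b' - a' * bl)
      + (dl - al) / 2 * ((al * d' - c' * bl) + (cl * b' - a' * dl))
      - bl * (cl * d' - c' * dl) with he
  have hEd : HasDerivAt Efun e lam := by
    have t1 : HasDerivAt (fun μ => al * H.θd 1 μ - H.θ 1 μ * bl) (al * b' - a' * bl) lam :=
      (hb.const_mul al).sub (ha.mul_const bl)
    have t2 : HasDerivAt (fun μ => al * H.φd 1 μ - 1 - H.φ 1 μ * bl)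
        (al * d' - c' * bl) lam := by
      have := ((hd.const_mul al).sub_const 1).sub (hc.mul_const bl)
      exact this
    have t3 : HasDerivAt (fun μ => cl * H.θd 1 μ - H.θ 1 μ * dl + 1)
        (cl * b' - a' * dl) lam := by
      have := ((hb.const_mul cl).sub (ha.mul_const dl)).add_const 1
      simpa using this
    have t4 : HasDerivAt (fun μ => cl * H.φd 1 μ - H.φ 1 μ * dl) (cl * d' - c' * dl) lam :=
      (hd.const_mul cl).sub (hc.mul_const dl)
    exact ((t1.const_mul cl).add ((t2.add t3).const_mul ((dl - al) / 2))).sub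
      (t4.const_mul bl)
  -- continuity of Q at lam
  have hI1 : ContinuousAt (fun μ : ℂ => ∫ x in (0:ℝ)..1, H.θ x lam * H.θ x μ) lam := by
    apply continuousAt_parametric_integral (r := 1) one_pos
    exact ((H.θ_cont.comp (continuous_snd.prodMk continuous_const)).mul
      (H.θ_cont.comp (continuous_snd.prodMk continuous_fst))).continuousOn
  have hI2 : ContinuousAt (fun μ : ℂ => ∫ x in (0:ℝ)..1, H.θ x lam * H.φ x μ) lam := by
    apply continuousAt_parametric_integral (r := 1) one_pos
    exact ((H.θ_cont.comp (continuous_snd.prodMk continuous_const)).mul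
      (H.φ_cont.comp (continuous_snd.prodMk continuous_fst))).continuousOn
  have hI3 : ContinuousAt (fun μ : ℂ => ∫ x in (0:ℝ)..1, H.φ x lam * H.θ x μ) lam := by
    apply continuousAt_parametric_integral (r := 1) one_pos
    exact ((H.φ_cont.comp (continuous_snd.prodMk continuous_const)).mul
      (H.θ_cont.comp (continuous_snd.prodMk continuous_fst))).continuousOn
  have hI4 : ContinuousAt (fun μ : ℂ => ∫ x in (0:ℝ)..1, H.φ x lam * H.φ x μ) lam := by
    apply continuousAt_parametric_integral (r := 1) one_pos
    exact ((H.φ_cont.comp (continuous_snd.prodMk continuous_const)).mul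
      (H.φ_cont.comp (continuous_snd.prodMk continuous_fst))).continuousOn
  have hQcont : ContinuousAt Q lam := by
    exact ((continuousAt_const.mul hI1).add
      (continuousAt_const.mul (hI2.add hI3))).sub (continuousAt_const.mul hI4)
  -- slope limit
  have hslope := hasDerivAt_iff_tendsto_slope.mp hEd
  have hcongr : ∀ᶠ μ in nhdsWithin lam {lam}ᶜ, slope Efun lam μ = -Q μ := by
    filter_upwards [self_mem_nhdsWithin] with μ hμ
    have hμ' : μ ≠ lam := hμ
    rw [slope_def_field, hE0, sub_zero, ← hQE μ]
    field_simp [sub_ne_zero.mpr hμ']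
    ring
  have htend1 : Filter.Tendsto (fun μ => -Q μ) (nhdsWithin lam {lam}ᶜ) (nhds e) :=
    hslope.congr' hcongr
  have htend2 : Filter.Tendsto (fun μ => -Q μ) (nhdsWithin lam {lam}ᶜ) (nhds (-(Q lam))) :=
    (hQcont.neg.tendsto).mono_left nhdsWithin_le_nhds
  have heQ : e = -(Q lam) := tendsto_nhds_unique htend1 htend2
  -- wronskian and its derivative
  have hW : al * dl - bl * cl = 1 := H.wronskian 1 lam
  have hW' : a' * dl + al * d' - (b' * cl + bl * c') = 0 := by
    have hWd : HasDerivAt (fun μ => H.θ 1 μ * H.φd 1 μ - H.θd 1 μ * H.φ 1 μ)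
        ((a' * dl + al * d') - (b' * cl + bl * c')) lam := (ha.mul hd).sub (hb.mul hc)
    have hWc : HasDerivAt (fun μ => H.θ 1 μ * H.φd 1 μ - H.θd 1 μ * H.φ 1 μ) 0 lam := by
      have hfun : (fun μ => H.θ 1 μ * H.φd 1 μ - H.θd 1 μ * H.φ 1 μ) = fun _ => (1:ℂ) :=
        funext (fun μ => H.wronskian 1 μ)
      rw [hfun]
      exact hasDerivAt_const lam 1
    exact hWd.unique hWc
  -- derivative of F
  have hFd : HasDerivAt H.F (a' + d') lam := by
    have : HasDerivAt (fun μ => H.θ 1 μ + H.φd 1 μ) (a' + d') lam := ha.add hd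
    exact this
  have hderivF : deriv H.F lam = a' + d' := hFd.deriv
  -- e = a' + d'
  have heval : e = a' + d' := by
    simp only [he]
    linear_combination (a' + d') * hW - ((al + dl) / 2) * hW'
  -- conclude
  have hI23 : (∫ x in (0:ℝ)..1, H.φ x lam * H.θ x lam)
      = ∫ x in (0:ℝ)..1, H.θ x lam * H.φ x lam := by
    apply intervalIntegral.integral_congr
    intro x _
    dsimp only
    ring
  have hQlam : Q lam = cl * (∫ x in (0:ℝ)..1, H.θ x lam * H.θ x lam)
      + (dl - al) * (∫ x in (0:ℝ)..1, H.θ x lam * H.φ x lam)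
      - bl * (∫ x in (0:ℝ)..1, H.φ x lam * H.φ x lam) := by
    simp only [hQ, hI23]
    ring
  rw [hderivF]
  have hQval : Q lam = -(a' + d') := by linear_combination heQ - heval
  rw [hQlam] at hQval
  exact hQval

end HillESS

namespace HillESS

lemma N_eq (H : HillContext) (t : ℝ) (lam : ℂ) (hF : H.F lam = 2 * (Real.cos t : ℂ)) :
    (∫ x in (0:ℝ)..1, H.Phi t x lam * H.Phi (-t) x lam)
      = - (H.φ 1 lam * deriv H.F lam) := by
  have hcθ : Continuous fun x => H.θ x lam :=
    H.θ_cont.comp (continuous_id.prodMk continuous_const)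
  have hcφ : Continuous fun x => H.φ x lam :=
    H.φ_cont.comp (continuous_id.prodMk continuous_const)
  have hE1 : Complex.exp (Complex.I * (t : ℂ)) * Complex.exp (Complex.I * ((-t : ℝ) : ℂ)) = 1 := by
    rw [← Complex.exp_add,
      show Complex.I * (t : ℂ) + Complex.I * ((-t : ℝ) : ℂ) = 0 by push_cast; ring,
      Complex.exp_zero]
  have hE2 : Complex.exp (Complex.I * (t : ℂ)) + Complex.exp (Complex.I * ((-t : ℝ) : ℂ))
      = H.θ 1 lam + H.φd 1 lam := by
    have h1 : Complex.exp (Complex.I * (t : ℂ)) = Complex.cos t + Complex.sin t * Complex.I := by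
      rw [mul_comm]; exact Complex.exp_mul_I _
    have h2 : Complex.exp (Complex.I * ((-t : ℝ) : ℂ))
        = Complex.cos t - Complex.sin t * Complex.I := by
      rw [mul_comm, show ((-t : ℝ) : ℂ) = -(t : ℂ) by push_cast; ring, Complex.exp_mul_I,
        Complex.cos_neg, Complex.sin_neg]
      ring
    have h3 : H.θ 1 lam + H.φd 1 lam = 2 * (Real.cos t : ℂ) := hF
    rw [h1, h2, h3, Complex.ofReal_cos]
    ring
  have hW : H.θ 1 lam * H.φd 1 lam - H.θd 1 lam * H.φ 1 lam = 1 := H.wronskian 1 lam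
  have hpt : ∀ x : ℝ, H.Phi t x lam * H.Phi (-t) x lam
      = H.φ 1 lam * (H.φ 1 lam * (H.θ x lam * H.θ x lam)
          + (H.φd 1 lam - H.θ 1 lam) * (H.θ x lam * H.φ x lam)
          - H.θd 1 lam * (H.φ x lam * H.φ x lam)) := by
    intro x
    simp only [HillContext.Phi]
    linear_combination (H.φ x lam * H.φ x lam) * hE1
      + (H.φ 1 lam * (H.θ x lam * H.φ x lam) - H.θ 1 lam * (H.φ x lam * H.φ x lam)) * hE2
      - (H.φ x lam * H.φ x lam) * hW
  rw [intervalIntegral.integral_congr (fun x _ => hpt x)]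
  have iθθ : IntervalIntegrable (fun x => H.θ x lam * H.θ x lam) volume 0 1 :=
    (hcθ.mul hcθ).intervalIntegrable 0 1
  have iθφ : IntervalIntegrable (fun x => H.θ x lam * H.φ x lam) volume 0 1 :=
    (hcθ.mul hcφ).intervalIntegrable 0 1
  have iφφ : IntervalIntegrable (fun x => H.φ x lam * H.φ x lam) volume 0 1 :=
    (hcφ.mul hcφ).intervalIntegrable 0 1
  rw [intervalIntegral.integral_const_mul]
  rw [intervalIntegral.integral_sub ((iθθ.const_mul _).add (iθφ.const_mul _))
    (iφφ.const_mul _)]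
  rw [intervalIntegral.integral_add (iθθ.const_mul _) (iθφ.const_mul _)]
  rw [intervalIntegral.integral_const_mul, intervalIntegral.integral_const_mul,
    intervalIntegral.integral_const_mul]
  linear_combination (H.φ 1 lam) * (J_eq H lam)

lemma l2norm_nonneg (f : ℝ → ℂ) : 0 ≤ l2norm f := Real.sqrt_nonneg _

lemma l2norm_pos {f : ℝ → ℂ} (hc : ContinuousOn f (Icc (0:ℝ) 1)) (h0 : f 0 ≠ 0) :
    0 < l2norm f := by
  have h01 : (0:ℝ) ≤ 1 := zero_le_one
  have hI : IntervalIntegrable (fun x => ‖f x‖ ^ 2) volume 0 1 := by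
    apply ContinuousOn.intervalIntegrable
    rw [uIcc_of_le h01]
    exact (hc.norm).pow 2
  have hpos : 0 < ‖f 0‖ := norm_pos_iff.mpr h0
  have hcw : ContinuousWithinAt (fun x => ‖f x‖) (Icc (0:ℝ) 1) 0 :=
    (hc.norm) 0 (by constructor <;> norm_num)
  have hev : ∀ᶠ x in nhdsWithin 0 (Icc (0:ℝ) 1), ‖f 0‖ / 2 < ‖f x‖ :=
    hcw.eventually (eventually_gt_nhds (by linarith))
  obtain ⟨ε, hε, hball⟩ := Metric.mem_nhdsWithin_iff.mp hev
  set ε' : ℝ := min (ε / 2) 1 with hε'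
  have hε'pos : 0 < ε' := lt_min (by linarith) one_pos
  have hε'le1 : ε' ≤ 1 := min_le_right _ _
  have hbound : ∀ x ∈ Icc (0:ℝ) ε', ‖f 0‖ / 2 ≤ ‖f x‖ := by
    intro x hx
    have hx1 : x ∈ Metric.ball (0:ℝ) ε := by
      rw [Metric.mem_ball, Real.dist_eq, sub_zero, abs_of_nonneg hx.1]
      calc x ≤ ε' := hx.2
        _ ≤ ε / 2 := min_le_left _ _
        _ < ε := by linarith
    have hx2 : x ∈ Icc (0:ℝ) 1 := ⟨hx.1, hx.2.trans hε'le1⟩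
    exact (hball ⟨hx1, hx2⟩).le
  have hIa : IntervalIntegrable (fun x => ‖f x‖ ^ 2) volume 0 ε' :=
    hI.mono_set (by rw [uIcc_of_le h01, uIcc_of_le hε'pos.le]; exact Icc_subset_Icc le_rfl hε'le1)
  have hIb : IntervalIntegrable (fun x => ‖f x‖ ^ 2) volume ε' 1 :=
    hI.mono_set (by rw [uIcc_of_le h01, uIcc_of_le hε'le1]; exact Icc_subset_Icc hε'pos.le le_rfl)
  have hsplit : (∫ x in (0:ℝ)..1, ‖f x‖ ^ 2)
      = (∫ x in (0:ℝ)..ε', ‖f x‖ ^ 2) + ∫ x in ε'..1, ‖f x‖ ^ 2 :=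
    (intervalIntegral.integral_add_adjacent_intervals hIa hIb).symm
  have hlow : ε' * ((‖f 0‖ / 2) ^ 2) ≤ ∫ x in (0:ℝ)..ε', ‖f x‖ ^ 2 := by
    have hmono := intervalIntegral.integral_mono_on hε'pos.le
      (intervalIntegrable_const (c := (‖f 0‖ / 2) ^ 2)) hIa
      (fun x hx => by
        have := hbound x hx
        have h2 : (0:ℝ) ≤ ‖f 0‖ / 2 := by linarith
        exact pow_le_pow_left₀ h2 this 2)
    simpa using hmono
  have hsecond : 0 ≤ ∫ x in ε'..1, ‖f x‖ ^ 2 :=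
    intervalIntegral.integral_nonneg hε'le1 (fun x _ => by positivity)
  have : 0 < ∫ x in (0:ℝ)..1, ‖f x‖ ^ 2 := by
    rw [hsplit]
    have : 0 < ε' * ((‖f 0‖ / 2) ^ 2) := by positivity
    linarith
  exact Real.sqrt_pos.mpr this

lemma alpha_eq (H : HillContext) (lamn : ℝ → ℂ) (t : ℝ)
    (hNp : l2norm (fun s => H.Phi t s (lamn t)) ≠ 0)
    (hNm : l2norm (fun s => H.Phi (-t) s (lamn t)) ≠ 0) :
    H.alpha lamn t = (∫ x in (0:ℝ)..1, H.Phi t x (lamn t) * H.Phi (-t) x (lamn t))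
      / (((l2norm (fun s => H.Phi t s (lamn t))
          * l2norm (fun s => H.Phi (-t) s (lamn t)) : ℝ)) : ℂ) := by
  unfold HillContext.alpha HillContext.Psi HillContext.PsiStar
  rw [← intervalIntegral.integral_div]
  apply intervalIntegral.integral_congr
  intro x _
  dsimp only
  rw [if_pos hNp, if_pos hNm, map_div₀, Complex.conj_conj, Complex.conj_ofReal,
    div_mul_div_comm, Complex.ofReal_mul]

end HillESS

namespace HillESS

lemma norm_bounds_near {g : ℂ → ℂ} (hg : Continuous g) {z₀ : ℂ} (hgz : g z₀ ≠ 0) :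
    ∃ r : ℝ, 0 < r ∧ ∀ z : ℂ, ‖z - z₀‖ ≤ r →
      ‖g z₀‖ / 2 ≤ ‖g z‖ ∧ ‖g z‖ ≤ 2 * ‖g z₀‖ := by
  have hpos : 0 < ‖g z₀‖ := norm_pos_iff.mpr hgz
  obtain ⟨δ, hδ, hball⟩ := Metric.continuousAt_iff.mp hg.continuousAt (‖g z₀‖ / 2) (by linarith)
  refine ⟨δ / 2, by linarith, ?_⟩
  intro z hz
  have hdist : dist z z₀ < δ := by rw [dist_eq_norm]; linarith
  have hgb := hball hdist
  rw [dist_eq_norm] at hgb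
  constructor
  · have h1 : ‖g z₀‖ - ‖g z‖ ≤ ‖g z - g z₀‖ := by
      have := norm_sub_norm_le (g z₀) (g z)
      rwa [norm_sub_rev] at this
    linarith
  · have h1 : ‖g z‖ - ‖g z₀‖ ≤ ‖g z - g z₀‖ := norm_sub_norm_le _ _
    linarith

set_option maxHeartbeats 2000000 in
lemma main_bounds (H : HillContext)
    (t₀ : ℝ) (ht₀ : t₀ = 0 ∨ t₀ = π) (m : ℕ) (hm : 2 ≤ m) (lam₀ : ℂ)
    (hF0 : H.F lam₀ = 2 * (Real.cos t₀ : ℂ))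
    (hFj : ∀ j : ℕ, 1 ≤ j → j ≤ m - 1 → iteratedDeriv j H.F lam₀ = 0)
    (hFm : iteratedDeriv m H.F lam₀ ≠ 0)
    (hφ : H.φ 1 lam₀ ≠ 0)
    (δ₀ : ℝ) (hδ₀ : 0 < δ₀)
    (lamn : ℝ → ℂ) (hcont : ContinuousOn lamn (Ioo (t₀ - δ₀) (t₀ + δ₀)))
    (hn0 : lamn t₀ = lam₀)
    (hFn : ∀ t ∈ Ioo (t₀ - δ₀) (t₀ + δ₀), H.F (lamn t) = 2 * (Real.cos t : ℂ)) :
    ∃ δ c₁ c₂ : ℝ, 0 < δ ∧ δ ≤ δ₀ ∧ 0 < c₁ ∧ 0 < c₂ ∧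
      ∀ t : ℝ, 0 < |t - t₀| → |t - t₀| ≤ δ →
        c₁ * |t - t₀| ^ (2 * ((m : ℝ) - 1) / (m : ℝ)) ≤ ‖H.alpha lamn t‖ ∧
        ‖H.alpha lamn t‖ ≤ c₂ * |t - t₀| ^ (2 * ((m : ℝ) - 1) / (m : ℝ)) := by
  have hπ : 0 < π := Real.pi_pos
  have hmpos : 0 < (m : ℝ) := by positivity
  have ht₀mem : t₀ ∈ Ioo (t₀ - δ₀) (t₀ + δ₀) := by constructor <;> linarith
  have hlamc : ContinuousAt lamn t₀ := hcont.continuousAt (isOpen_Ioo.mem_nhds ht₀mem)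
  -- factorization of f = F - 2 cos t₀
  have hFdiff : Differentiable ℂ H.F := fun z => ((H.θ_entire 1 z).add (H.φd_entire 1 z))
  set f : ℂ → ℂ := fun z => H.F z - 2 * (Real.cos t₀ : ℂ) with hfdef
  have hfdiff : Differentiable ℂ f := hFdiff.sub_const _
  have hder_eq : ∀ j : ℕ, 1 ≤ j → iteratedDeriv j f lam₀ = iteratedDeriv j H.F lam₀ := by
    intro j hj
    obtain ⟨i, rfl⟩ : ∃ i, j = i + 1 := ⟨j - 1, by omega⟩
    rw [iteratedDeriv_succ', iteratedDeriv_succ']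
    congr 1
    funext z
    exact deriv_sub_const _
  have hf0 : ∀ j < m, iteratedDeriv j f lam₀ = 0 := by
    intro j hj
    rcases Nat.eq_zero_or_pos j with rfl | hjpos
    · simp only [iteratedDeriv_zero, hfdef]
      exact sub_eq_zero.mpr hF0
    · rw [hder_eq j hjpos]
      exact hFj j hjpos (by omega)
  have hfm : iteratedDeriv m f lam₀ ≠ 0 := by
    rw [hder_eq m (by omega)]; exact hFm
  obtain ⟨g, hg, hfg, hgval⟩ := factor_of_derivs f hfdiff lam₀ m hf0
  have hg0 : g lam₀ ≠ 0 := by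
    intro h0
    rw [h0, mul_zero] at hgval
    exact hfm hgval.symm
  -- derivative factorization : deriv F = (z - lam₀)^(m-1) * h
  set k : ℕ := m - 1 with hkdef
  have hmk : m = k + 1 := by omega
  set h : ℂ → ℂ := fun z => ((m : ℕ) : ℂ) * g z + (z - lam₀) * deriv g z with hhdef
  have hgd : Differentiable ℂ (deriv g) := by
    intro z
    have hA : AnalyticOnNhd ℂ g univ := fun w _ => hg.analyticAt w
    exact (hA.deriv z (mem_univ z)).differentiableAt
  have hhdiff : Differentiable ℂ h :=
    ((differentiable_const _).mul hg).add ((differentiable_id.sub_const _).mul hgd)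
  have hderivF : ∀ z : ℂ, deriv H.F z = (z - lam₀) ^ k * h z := by
    intro z
    have hp2 : HasDerivAt (fun w : ℂ => (w - lam₀) ^ m) ((m : ℂ) * (z - lam₀) ^ k) z := by
      have h1 : HasDerivAt (fun w : ℂ => w - lam₀) 1 z := (hasDerivAt_id z).sub_const lam₀
      have h2 := (hasDerivAt_pow m (z - lam₀)).comp z h1
      have h3 : m - 1 = k := rfl
      simp [h3] at h2; exact h2
    have H1 : HasDerivAt f ((m : ℂ) * (z - lam₀) ^ k * g z + (z - lam₀) ^ m * deriv g z) z := by
      have hmul := hp2.mul ((hg z).hasDerivAt)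
      have hfeq : f = fun w => (w - lam₀) ^ m * g w := funext hfg
      rw [hfeq]
      exact hmul
    have e1 : deriv f z = (m : ℂ) * (z - lam₀) ^ k * g z + (z - lam₀) ^ m * deriv g z :=
      H1.deriv
    have e2 : deriv f z = deriv H.F z := by
      simp only [hfdef]
      exact deriv_sub_const _
    rw [← e2, e1, hmk]
    simp only [hhdef, hmk]
    push_cast
    ring
  have hh0 : h lam₀ ≠ 0 := by
    simp only [hhdef, sub_self, zero_mul, add_zero]
    exact mul_ne_zero (Nat.cast_ne_zero.mpr (by omega)) hg0
  obtain ⟨r1, C1, C2, hr1, hC1, hC2, hbound1⟩ :=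
    bounds_of_factor f g lam₀ m hg.continuous hg0 hfg
  obtain ⟨r2, D1, D2, hr2, hD1, hD2, hbound2⟩ :=
    bounds_of_factor (deriv H.F) h lam₀ k hhdiff.continuous hh0 hderivF
  -- φ(1,·) bounds
  have hφcont : Continuous (H.φ 1) := H.φ_cont.comp (continuous_const.prodMk continuous_id)
  obtain ⟨r3, hr3, hφbound⟩ := norm_bounds_near hφcont hφ
  set rmin : ℝ := min r1 (min r2 r3) with hrmin
  have hrminpos : 0 < rmin := lt_min hr1 (lt_min hr2 hr3)
  -- l2 norms
  set Np : ℝ → ℝ := fun t => l2norm (fun s => H.Phi t s (lamn t)) with hNp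
  set Nm : ℝ → ℝ := fun t => l2norm (fun s => H.Phi (-t) s (lamn t)) with hNm
  have hball_sub : Metric.closedBall t₀ (δ₀ / 2) ⊆ Ioo (t₀ - δ₀) (t₀ + δ₀) := by
    intro x hx
    rw [Metric.mem_closedBall, Real.dist_eq] at hx
    have := abs_le.mp hx
    constructor <;> [linarith [this.1]; linarith [this.2]]
  set S : Set (ℝ × ℝ) := (Metric.closedBall t₀ (δ₀ / 2)) ×ˢ Icc (0:ℝ) 1 with hS
  have hlamnS : ContinuousOn (fun pr : ℝ × ℝ => lamn pr.1) S :=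
    hcont.comp continuous_fst.continuousOn (fun pr hpr => hball_sub hpr.1)
  have hPhiJoint : ∀ σ : ℝ, σ = 1 ∨ σ = -1 →
      ContinuousOn (fun pr : ℝ × ℝ => H.Phi (σ * pr.1) pr.2 (lamn pr.1)) S := by
    intro σ _
    have c1 : ContinuousOn (fun pr : ℝ × ℝ => H.φ 1 (lamn pr.1)) S :=
      H.φ_cont.comp_continuousOn (continuousOn_const.prodMk hlamnS)
    have c2 : ContinuousOn (fun pr : ℝ × ℝ => H.θ pr.2 (lamn pr.1)) S :=
      H.θ_cont.comp_continuousOn (continuous_snd.continuousOn.prodMk hlamnS)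
    have c3 : ContinuousOn (fun pr : ℝ × ℝ => H.θ 1 (lamn pr.1)) S :=
      H.θ_cont.comp_continuousOn (continuousOn_const.prodMk hlamnS)
    have c4 : ContinuousOn (fun pr : ℝ × ℝ => H.φ pr.2 (lamn pr.1)) S :=
      H.φ_cont.comp_continuousOn (continuous_snd.continuousOn.prodMk hlamnS)
    have cexp : ContinuousOn (fun pr : ℝ × ℝ => Complex.exp (Complex.I * ((σ * pr.1 : ℝ) : ℂ))) S :=
      (Complex.continuous_exp.comp (continuous_const.mul
        (Complex.continuous_ofReal.comp (continuous_const.mul continuous_fst)))).continuousOn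
    exact (c1.mul c2).add ((cexp.sub c3).mul c4)
  have hNpc : ContinuousAt Np t₀ := by
    apply Real.continuous_sqrt.continuousAt.comp
    apply continuousAt_parametric_integral (half_pos hδ₀)
    have := (hPhiJoint 1 (Or.inl rfl)).norm.pow 2
    simp only [one_mul] at this; exact this
  have hNmc : ContinuousAt Nm t₀ := by
    apply Real.continuous_sqrt.continuousAt.comp
    apply continuousAt_parametric_integral (half_pos hδ₀)
    have := (hPhiJoint (-1) (Or.inr rfl)).norm.pow 2
    have h2 : ∀ pr : ℝ × ℝ, (-1 : ℝ) * pr.1 = -pr.1 := fun pr => by ring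
    simp only [h2] at this; exact this
  have hcθ0 : Continuous fun x => H.θ x lam₀ :=
    H.θ_cont.comp (continuous_id.prodMk continuous_const)
  have hcφ0 : Continuous fun x => H.φ x lam₀ :=
    H.φ_cont.comp (continuous_id.prodMk continuous_const)
  have hPhi0pos : ∀ τ : ℝ, 0 < l2norm (fun s => H.Phi τ s lam₀) := by
    intro τ
    apply l2norm_pos
    · exact ((continuous_const.mul hcθ0).add (continuous_const.mul hcφ0)).continuousOn
    · simp only [HillContext.Phi, H.θ_init, H.φ_init, mul_one, mul_zero, add_zero]
      exact hφ
  have hNp0 : 0 < Np t₀ := by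
    simp only [hNp, hn0]
    exact hPhi0pos t₀
  have hNm0 : 0 < Nm t₀ := by
    simp only [hNm, hn0]
    exact hPhi0pos (-t₀)
  -- eventual estimates
  have hev : ∀ᶠ t in nhds t₀, (t ∈ Ioo (t₀ - δ₀) (t₀ + δ₀))
      ∧ ‖lamn t - lam₀‖ ≤ rmin
      ∧ Np t₀ / 2 < Np t ∧ Np t < 2 * Np t₀
      ∧ Nm t₀ / 2 < Nm t ∧ Nm t < 2 * Nm t₀ := by
    have e1 : ∀ᶠ t in nhds t₀, t ∈ Ioo (t₀ - δ₀) (t₀ + δ₀) :=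
      isOpen_Ioo.mem_nhds ht₀mem
    have e2 : ∀ᶠ t in nhds t₀, ‖lamn t - lam₀‖ ≤ rmin := by
      have hcb : ∀ᶠ z in nhds lam₀, ‖z - lam₀‖ ≤ rmin := by
        have := Metric.closedBall_mem_nhds lam₀ hrminpos
        filter_upwards [this] with z hz
        rwa [Metric.mem_closedBall, dist_eq_norm] at hz
      have hlamc' : Filter.Tendsto lamn (nhds t₀) (nhds lam₀) := by
        rw [← hn0]; exact hlamc
      exact hlamc'.eventually hcb
    have e3 : ∀ᶠ t in nhds t₀, Np t₀ / 2 < Np t :=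
      hNpc.eventually (eventually_gt_nhds (by linarith))
    have e4 : ∀ᶠ t in nhds t₀, Np t < 2 * Np t₀ :=
      hNpc.eventually (eventually_lt_nhds (by linarith))
    have e5 : ∀ᶠ t in nhds t₀, Nm t₀ / 2 < Nm t :=
      hNmc.eventually (eventually_gt_nhds (by linarith))
    have e6 : ∀ᶠ t in nhds t₀, Nm t < 2 * Nm t₀ :=
      hNmc.eventually (eventually_lt_nhds (by linarith))
    filter_upwards [e1, e2, e3, e4, e5, e6] with t h1 h2 h3 h4 h5 h6
    exact ⟨h1, h2, h3, h4, h5, h6⟩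
  obtain ⟨δ', hδ', hδimp⟩ := Metric.eventually_nhds_iff.mp hev
  -- choose δ
  set δ : ℝ := min (δ' / 2) (min δ₀ 1) with hδdef
  have hδpos : 0 < δ := lt_min (by linarith) (lt_min hδ₀ one_pos)
  have hδle : δ ≤ δ₀ := le_trans (min_le_right _ _) (min_le_left _ _)
  have hδ1 : δ ≤ 1 := le_trans (min_le_right _ _) (min_le_right _ _)
  -- constants
  set φ0 : ℝ := ‖H.φ 1 lam₀‖ with hφ0def
  have hφ0pos : 0 < φ0 := norm_pos_iff.mpr hφ
  set q : ℝ := ((m : ℝ))⁻¹ * (k : ℕ) with hqdef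
  set p : ℝ := 2 * ((m : ℝ) - 1) / (m : ℝ) with hpdef
  have hkcast : ((k : ℕ) : ℝ) = (m : ℝ) - 1 := by
    rw [hkdef]
    push_cast [Nat.cast_sub (by omega : 1 ≤ m)]
    ring
  have hq2p : 2 * q = p := by
    rw [hqdef, hpdef, hkcast]
    field_simp
  set KL : ℝ := ((4 / π ^ 2) / C2) ^ q with hKL
  set KU : ℝ := (C1⁻¹) ^ q with hKU
  have hKLpos : 0 < KL := Real.rpow_pos_of_pos (by positivity) q
  have hKUpos : 0 < KU := Real.rpow_pos_of_pos (by positivity) q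
  set c₁ : ℝ := (φ0 / 2) * (D1 * KL) / (4 * (Np t₀ * Nm t₀)) with hc₁
  set c₂ : ℝ := (2 * φ0) * (D2 * KU) / ((Np t₀ / 2) * (Nm t₀ / 2)) with hc₂
  have hc₁pos : 0 < c₁ := by positivity
  have hc₂pos : 0 < c₂ := by positivity
  refine ⟨δ, c₁, c₂, hδpos, hδle, hc₁pos, hc₂pos, ?_⟩
  intro t htpos htle
  set s : ℝ := |t - t₀| with hsdef
  have hspos : 0 < s := htpos
  have hs1 : s ≤ 1 := le_trans htle hδ1
  have hdist : dist t t₀ < δ' := by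
    rw [Real.dist_eq]
    calc |t - t₀| ≤ δ := htle
      _ ≤ δ' / 2 := min_le_left _ _
      _ < δ' := by linarith
  obtain ⟨htIoo, hlamball, hNp1, hNp2, hNm1, hNm2⟩ := hδimp hdist
  set lamt : ℂ := lamn t with hlamt
  set w : ℝ := ‖lamt - lam₀‖ with hwdef
  have hw0 : 0 ≤ w := norm_nonneg _
  have hwr1 : w ≤ r1 := le_trans hlamball (min_le_left _ _)
  have hwr2 : w ≤ r2 := le_trans hlamball (le_trans (min_le_right _ _) (min_le_left _ _))
  have hwr3 : w ≤ r3 := le_trans hlamball (le_trans (min_le_right _ _) (min_le_right _ _))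
  -- cosine estimate
  have hfval : f lamt = ((2 * Real.cos t - 2 * Real.cos t₀ : ℝ) : ℂ) := by
    simp only [hfdef]
    rw [hFn t htIoo]
    push_cast
    ring
  have hfnorm : ‖f lamt‖ = |2 * Real.cos t - 2 * Real.cos t₀| := by
    rw [hfval, Complex.norm_real, Real.norm_eq_abs]
  have htπ : |t - t₀| ≤ π := by
    calc |t - t₀| ≤ δ := htle
      _ ≤ 1 := hδ1
      _ ≤ π := by linarith [Real.pi_gt_three]
  obtain ⟨hcos_low, hcos_up⟩ := cos_diff_bounds t₀ t ht₀ htπ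
  have hf_up : ‖f lamt‖ ≤ s ^ (2:ℕ) := by
    rw [hfnorm, hsdef]
    calc |2 * Real.cos t - 2 * Real.cos t₀| ≤ (t - t₀) ^ 2 := hcos_up
      _ = |t - t₀| ^ (2:ℕ) := by rw [sq_abs]
  have hf_low : (4 / π ^ 2) * s ^ (2:ℕ) ≤ ‖f lamt‖ := by
    rw [hfnorm, hsdef, sq_abs]
    exact hcos_low
  obtain ⟨hfac_low, hfac_up⟩ := hbound1 lamt hwr1
  -- bounds on w^m
  have hwm_up : w ^ m ≤ s ^ (2:ℕ) / C1 := by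
    rw [le_div_iff₀ hC1, mul_comm]
    exact le_trans hfac_low hf_up
  have hwm_low : (4 / π ^ 2 / C2) * s ^ (2:ℕ) ≤ w ^ m := by
    rw [div_mul_eq_mul_div, div_le_iff₀ hC2, mul_comm (w ^ m)]
    calc 4 / π ^ 2 * s ^ (2:ℕ) ≤ ‖f lamt‖ := hf_low
      _ ≤ C2 * w ^ m := hfac_up
  -- bounds on w
  have hm0 : m ≠ 0 := by omega
  have hw_up : w ≤ (s ^ (2:ℕ) / C1) ^ ((m : ℝ))⁻¹ := by
    have h1 := Real.rpow_le_rpow (by positivity) hwm_up (by positivity : (0:ℝ) ≤ ((m:ℝ))⁻¹)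
    rwa [Real.pow_rpow_inv_natCast hw0 hm0] at h1
  have hw_low : ((4 / π ^ 2 / C2) * s ^ (2:ℕ)) ^ ((m : ℝ))⁻¹ ≤ w := by
    have h1 := Real.rpow_le_rpow (by positivity) hwm_low (by positivity : (0:ℝ) ≤ ((m:ℝ))⁻¹)
    rwa [Real.pow_rpow_inv_natCast hw0 hm0] at h1
  -- bounds on w^k
  have hsp_pos : 0 < s ^ p := Real.rpow_pos_of_pos hspos p
  have hs2q : (s ^ (2:ℕ) : ℝ) ^ q = s ^ p := by
    rw [← Real.rpow_natCast s 2, ← Real.rpow_mul hspos.le, ← hq2p]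
    norm_num
  have hwk_up : w ^ k ≤ KU * s ^ p := by
    calc w ^ k ≤ ((s ^ (2:ℕ) / C1) ^ ((m : ℝ))⁻¹) ^ k := pow_le_pow_left₀ hw0 hw_up k
      _ = (s ^ (2:ℕ) / C1) ^ q := by
          rw [← Real.rpow_natCast ((s ^ (2:ℕ) / C1) ^ ((m : ℝ))⁻¹) k,
            ← Real.rpow_mul (by positivity)]
      _ = KU * s ^ p := by
          rw [hKU, div_eq_mul_inv, Real.mul_rpow (by positivity) (by positivity), hs2q]
          ring
  have hwk_low : KL * s ^ p ≤ w ^ k := by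
    calc KL * s ^ p = ((4 / π ^ 2 / C2) * s ^ (2:ℕ)) ^ q := by
          rw [hKL, Real.mul_rpow (by positivity) (by positivity), hs2q]
      _ = (((4 / π ^ 2 / C2) * s ^ (2:ℕ)) ^ ((m : ℝ))⁻¹) ^ k := by
          rw [← Real.rpow_natCast (((4 / π ^ 2 / C2) * s ^ (2:ℕ)) ^ ((m : ℝ))⁻¹) k,
            ← Real.rpow_mul (by positivity)]
      _ ≤ w ^ k := pow_le_pow_left₀ (by positivity) hw_low k
  -- F' bounds
  obtain ⟨hF'low, hF'up⟩ := hbound2 lamt hwr2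
  -- φ bounds
  obtain ⟨hφlow, hφup⟩ := hφbound lamt hwr3
  -- alpha formula
  have hNppos : 0 < Np t := lt_trans (by linarith) hNp1
  have hNmpos : 0 < Nm t := lt_trans (by linarith) hNm1
  have halpha := alpha_eq H lamn t (ne_of_gt hNppos) (ne_of_gt hNmpos)
  rw [N_eq H t (lamn t) (hFn t htIoo)] at halpha
  have hαnorm : ‖H.alpha lamn t‖
      = ‖H.φ 1 lamt‖ * ‖deriv H.F lamt‖ / (Np t * Nm t) := by
    rw [halpha, norm_div, norm_neg, norm_mul, Complex.norm_real, Real.norm_eq_abs,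
      abs_of_pos (by positivity)]
  rw [hαnorm]
  constructor
  · -- lower bound
    have hnum : (φ0 / 2) * (D1 * (KL * s ^ p)) ≤ ‖H.φ 1 lamt‖ * ‖deriv H.F lamt‖ := by
      apply mul_le_mul hφlow _ (by positivity) (norm_nonneg _)
      calc D1 * (KL * s ^ p) ≤ D1 * w ^ k := by
            exact mul_le_mul_of_nonneg_left hwk_low hD1.le
        _ ≤ ‖deriv H.F lamt‖ := hF'low
    have hden : Np t * Nm t ≤ 4 * (Np t₀ * Nm t₀) := by
      calc Np t * Nm t ≤ (2 * Np t₀) * (2 * Nm t₀) :=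
            mul_le_mul hNp2.le hNm2.le hNmpos.le (by positivity)
        _ = 4 * (Np t₀ * Nm t₀) := by ring
    calc c₁ * s ^ p = (φ0 / 2) * (D1 * (KL * s ^ p)) / (4 * (Np t₀ * Nm t₀)) := by
          rw [hc₁]; ring
      _ ≤ ‖H.φ 1 lamt‖ * ‖deriv H.F lamt‖ / (Np t * Nm t) := by
          apply div_le_div₀ (by positivity) hnum (by positivity) hden
  · -- upper bound
    have hnum : ‖H.φ 1 lamt‖ * ‖deriv H.F lamt‖ ≤ (2 * φ0) * (D2 * (KU * s ^ p)) := by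
      apply mul_le_mul hφup _ (norm_nonneg _) (by positivity)
      calc ‖deriv H.F lamt‖ ≤ D2 * w ^ k := hF'up
        _ ≤ D2 * (KU * s ^ p) := mul_le_mul_of_nonneg_left hwk_up hD2.le
    have hden : (Np t₀ / 2) * (Nm t₀ / 2) ≤ Np t * Nm t :=
      mul_le_mul hNp1.le hNm1.le (by positivity) hNppos.le
    calc ‖H.φ 1 lamt‖ * ‖deriv H.F lamt‖ / (Np t * Nm t)
        ≤ (2 * φ0) * (D2 * (KU * s ^ p)) / ((Np t₀ / 2) * (Nm t₀ / 2)) := by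
          apply div_le_div₀ (by positivity) hnum (by positivity) hden
      _ = c₂ * s ^ p := by rw [hc₂]; ring

end HillESS

/-- (Proposition 4.)  Let `m ≥ 2` and let `λ₀` be an eigenvalue of `L₀` (resp. `L_π`) of
multiplicity `m` (`F(λ₀) = 2 cos t₀` with `t₀ ∈ {0,π}`, `F⁽ʲ⁾(λ₀) = 0` for `1 ≤ j ≤ m-1`,
`F⁽ᵐ⁾(λ₀) ≠ 0`) whose geometric multiplicity is `1`, with `φ(1,λ₀) ≠ 0` (the case
`θ'(1,λ₀) ≠ 0` being symmetric).  If `λ_n` is a continuous branch on `(t₀-δ₀, t₀+δ₀)`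
with `λ_n(t₀) = λ₀` and `F(λ_n(t)) = 2 cos t`, then `|α_n(t)| ∼ |t-t₀|^{2(m-1)/m}` as
`t → t₀`; since `2(m-1)/m ≥ 1`, the function `1/|α_n|` is not Lebesgue integrable on any
punctured neighborhood of `t₀`, i.e. `λ₀` is an essential spectral singularity of `L`. -/
theorem geometric_mult_one_multiple_eigenvalue_is_ESS (H : HillContext)
    (t₀ : ℝ) (ht₀ : t₀ = 0 ∨ t₀ = π) (m : ℕ) (hm : 2 ≤ m) (lam₀ : ℂ)
    (hF0 : H.F lam₀ = 2 * (Real.cos t₀ : ℂ))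
    (hFj : ∀ j : ℕ, 1 ≤ j → j ≤ m - 1 → iteratedDeriv j H.F lam₀ = 0)
    (hFm : iteratedDeriv m H.F lam₀ ≠ 0)
    (hφ : H.φ 1 lam₀ ≠ 0)
    (δ₀ : ℝ) (hδ₀ : 0 < δ₀)
    (lamn : ℝ → ℂ) (hcont : ContinuousOn lamn (Ioo (t₀ - δ₀) (t₀ + δ₀)))
    (hn0 : lamn t₀ = lam₀)
    (hFn : ∀ t ∈ Ioo (t₀ - δ₀) (t₀ + δ₀), H.F (lamn t) = 2 * (Real.cos t : ℂ)) :
    (∃ δ c₁ c₂ : ℝ, 0 < δ ∧ δ ≤ δ₀ ∧ 0 < c₁ ∧ 0 < c₂ ∧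
      ∀ t : ℝ, 0 < |t - t₀| → |t - t₀| ≤ δ →
        c₁ * |t - t₀| ^ (2 * ((m : ℝ) - 1) / (m : ℝ)) ≤ ‖H.alpha lamn t‖ ∧
        ‖H.alpha lamn t‖ ≤ c₂ * |t - t₀| ^ (2 * ((m : ℝ) - 1) / (m : ℝ))) ∧
    (∀ δ : ℝ, 0 < δ → δ ≤ δ₀ →
      ¬ IntegrableOn (fun t => 1 / ‖H.alpha lamn t‖) (Icc (t₀ - δ) (t₀ + δ) \ {t₀})) := by
  have MAIN := HillESS.main_bounds H t₀ ht₀ m hm lam₀ hF0 hFj hFm hφ δ₀ hδ₀ lamn hcont hn0 hFn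
  refine ⟨MAIN, ?_⟩
  obtain ⟨δa, c₁, c₂, hδa, hδaδ₀, hc₁, hc₂, hbd⟩ := MAIN
  intro δ hδpos hδle hInt
  set p : ℝ := 2 * ((m : ℝ) - 1) / (m : ℝ) with hp
  have hmpos : 0 < (m : ℝ) := by positivity
  have hp1 : 1 ≤ p := by
    rw [hp, le_div_iff₀ hmpos]
    have h2m : (2 : ℝ) ≤ (m : ℝ) := by exact_mod_cast hm
    linarith
  set δ' : ℝ := min δ (min δa 1) with hδ'def
  have hδ'pos : 0 < δ' := lt_min hδpos (lt_min hδa one_pos)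
  have hδ'δ : δ' ≤ δ := min_le_left _ _
  have hδ'a : δ' ≤ δa := le_trans (min_le_right _ _) (min_le_left _ _)
  have hδ'1 : δ' ≤ 1 := le_trans (min_le_right _ _) (min_le_right _ _)
  have hsub : Ioo t₀ (t₀ + δ') ⊆ Icc (t₀ - δ) (t₀ + δ) \ {t₀} := by
    intro x hx
    refine ⟨⟨by linarith [hx.1], by linarith [hx.2, hδ'δ]⟩, ?_⟩
    simp only [mem_singleton_iff]
    intro hxx
    rw [hxx] at hx
    exact lt_irrefl _ hx.1
  have hres : IntegrableOn (fun t => 1 / ‖H.alpha lamn t‖) (Ioo t₀ (t₀ + δ')) :=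
    hInt.mono_set hsub
  have hres2 : IntegrableOn (fun t => c₂ * (1 / ‖H.alpha lamn t‖)) (Ioo t₀ (t₀ + δ')) :=
    hres.const_mul _
  have hcmp : IntegrableOn (fun x => (x - t₀)⁻¹) (Ioo t₀ (t₀ + δ')) := by
    apply Integrable.mono' hres2
    · exact ((measurable_id.sub_const t₀).inv).aestronglyMeasurable
    · rw [ae_restrict_iff' measurableSet_Ioo]
      refine Filter.Eventually.of_forall (fun x hx => ?_)
      have hspos : 0 < x - t₀ := by linarith [hx.1]
      have hs1 : x - t₀ ≤ 1 := by linarith [hx.2, hδ'1]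
      have habs : |x - t₀| = x - t₀ := abs_of_pos hspos
      have hbds := hbd x (by rw [habs]; exact hspos) (by rw [habs]; linarith [hx.2, hδ'a])
      rw [habs] at hbds
      have hrp : 0 < (x - t₀) ^ p := Real.rpow_pos_of_pos hspos p
      have hαpos : 0 < ‖H.alpha lamn x‖ :=
        lt_of_lt_of_le (mul_pos hc₁ hrp) hbds.1
      have h1 : 1 / (c₂ * (x - t₀) ^ p) ≤ 1 / ‖H.alpha lamn x‖ :=
        one_div_le_one_div_of_le hαpos hbds.2
      have h2 : (x - t₀)⁻¹ ≤ (x - t₀) ^ (-p) := by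
        rw [← Real.rpow_neg_one]
        exact Real.rpow_le_rpow_of_exponent_ge hspos hs1 (by linarith)
      have h3 : (x - t₀) ^ (-p) = c₂ * (1 / (c₂ * (x - t₀) ^ p)) := by
        rw [Real.rpow_neg hspos.le]
        field_simp
      have h5 : ‖(x - t₀)⁻¹‖ = (x - t₀)⁻¹ := by
        rw [Real.norm_eq_abs, abs_of_pos (inv_pos.mpr hspos)]
      rw [h5]
      calc (x - t₀)⁻¹ ≤ (x - t₀) ^ (-p) := h2
        _ = c₂ * (1 / (c₂ * (x - t₀) ^ p)) := h3
        _ ≤ c₂ * (1 / ‖H.alpha lamn x‖) := mul_le_mul_of_nonneg_left h1 hc₂.le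
  have hII : IntervalIntegrable (fun x => (x - t₀)⁻¹) volume t₀ (t₀ + δ') := by
    rw [intervalIntegrable_iff_integrableOn_Ioo_of_le (by linarith)]
    exact hcmp
  rcases intervalIntegrable_sub_inv_iff.mp hII with h | h
  · linarith
  · exact h left_mem_uIcc


end
end
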